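/- arXiv:1910.13870 — 4 statements merged into one kernel-verified Lean document; each statement's English description precedes it below -/
import Mathlib

section
/- Assume the mesh functions (u_h)_{h>0} converge uniformly on compact subsets of Ω to a continuous convex function u : Ω → ℝ. Let K be compact and U open with K ⊂ U ⊆ Ū ⊂ Ω. Assume additionally: for every sequence h_k → 0, every subsequence (k_j), and every choice of nodes z_{k_j} ∈ N_{h_{k_j}} with z_{k_j} → z₀ ∈ ∂Ω, one has liminf_{j→∞} ũ(z_{k_j}) ≤ limsup_{j→∞} u_{h_{k_j}}(z_{k_j}), where ũ is the extension of u. Then for every sequence h_k → 0, the set ∂u(K) \ (⋃_{n} ⋂_{k ≥ n} ∂Γ(u_{h_k})(U ∩ conv(N_{h_k}))) has d-dimensional Lebesgue measure zero. -/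
open Set MeasureTheory Filter Topology

noncomputable section

abbrev Euc (d : ℕ) := EuclideanSpace ℝ (Fin d)

/-- Subdifferential of `v` at `x` relative to the set `C`. -/
def subdiff {d : ℕ} (C : Set (Euc d)) (v : Euc d → ℝ) (x : Euc d) : Set (Euc d) :=
  {p | ∀ y ∈ C, v x + (inner ℝ p (y - x) : ℝ) ≤ v y}

/-- `⋃ x ∈ S, subdiff C v x`. -/
def subdiffSet {d : ℕ} (C : Set (Euc d)) (v : Euc d → ℝ) (S : Set (Euc d)) : Set (Euc d) :=
  ⋃ x ∈ S, subdiff C v x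

/-- The convex extension `ũ` of `u : Ω → ℝ` (may take the value `+∞`, hence `EReal`). -/
def extFun {d : ℕ} (Ω : Set (Euc d)) (u : Euc d → ℝ) (x : Euc d) : EReal :=
  ⨆ y ∈ Ω, ⨆ q ∈ subdiff Ω u y, ((u y + (inner ℝ q (x - y) : ℝ) : ℝ) : EReal)

/-- `χ_u(x)`: the subdifferential of the extension `ũ` at `x`. -/
def chiSub {d : ℕ} (Ω : Set (Euc d)) (u : Euc d → ℝ) (x : Euc d) : Set (Euc d) :=
  {p | ∀ z : Euc d, extFun Ω u x + (((inner ℝ p (z - x) : ℝ) : ℝ) : EReal) ≤ extFun Ω u z}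

def chiSubSet {d : ℕ} (Ω : Set (Euc d)) (u : Euc d → ℝ) (S : Set (Euc d)) : Set (Euc d) :=
  ⋃ x ∈ S, chiSub Ω u x

/-- The lattice `hℤ^d`. -/
def latt (d : ℕ) (h : ℝ) : Set (Euc d) := {x | ∀ i, ∃ m : ℤ, x i = m * h}

/-- `Ω_h = Ω ∩ hℤ^d`. -/
def meshΩ {d : ℕ} (Ω : Set (Euc d)) (h : ℝ) : Set (Euc d) := Ω ∩ latt d h

/-- An integer direction `e ∈ ℤ^d` as a vector of `ℝ^d`. -/
def intVec {d : ℕ} (e : Fin d → ℤ) : Euc d :=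
  (EuclideanSpace.equiv (Fin d) ℝ).symm (fun i => (e i : ℝ))

/-- `h^e_x = sup { r h : r ∈ [0,1], x + r h e ∈ closure Ω }`. -/
def hev {d : ℕ} (Ω : Set (Euc d)) (h : ℝ) (x : Euc d) (e : Fin d → ℤ) : ℝ :=
  sSup {t | ∃ r ∈ Icc (0:ℝ) 1, t = r * h ∧ x + (r * h) • intVec e ∈ closure Ω}

/-- The boundary nodes `∂Ω_h` for the direction set `V`. -/
def meshBd {d : ℕ} (Ω : Set (Euc d)) (h : ℝ) (V : Set (Fin d → ℤ)) : Set (Euc d) :=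
  {x ∈ frontier Ω | ∃ y ∈ meshΩ Ω h, ∃ e ∈ V, x = y + hev Ω h y e • intVec e}

/-- The convex envelope of `u` with constraints on `N`:
`Γ(u)(x) = sup {L x : L affine, L ≤ u on N}`. -/
def convEnv {d : ℕ} (N : Set (Euc d)) (u : Euc d → ℝ) (x : Euc d) : ℝ :=
  sSup {t | ∃ (p : Euc d) (c : ℝ),
    (∀ y ∈ N, (inner ℝ p y : ℝ) + c ≤ u y) ∧ t = (inner ℝ p x : ℝ) + c}

/-- The second difference operator `Δ_e u_h (x)`. -/
def deltaE {d : ℕ} (Ω : Set (Euc d)) (h : ℝ) (u : Euc d → ℝ) (e : Fin d → ℤ)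
    (x : Euc d) : ℝ :=
  2 / (hev Ω h x e + hev Ω h x (-e)) *
    ((u (x + hev Ω h x e • intVec e) - u x) / hev Ω h x e +
     (u (x + hev Ω h x (-e) • intVec (-e)) - u x) / hev Ω h x (-e))

/-- Discrete convexity with the full set of directions `e ∈ ℤ^d \ {0}`. -/
def DiscConvex {d : ℕ} (Ω : Set (Euc d)) (h : ℝ) (u : Euc d → ℝ) : Prop :=
  ∀ x ∈ meshΩ Ω h, ∀ e : Fin d → ℤ, e ≠ 0 → 0 ≤ deltaE Ω h u e x


section Aux

variable {d : ℕ}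

local notation "⟪" x ", " y "⟫" => (inner ℝ x y : ℝ)

lemma exists_subgrad {Ω : Set (Euc d)} (hop : IsOpen Ω) (hcv : Convex ℝ Ω)
    {u : Euc d → ℝ} (huc : ContinuousOn u Ω) (hucv : ConvexOn ℝ Ω u)
    {y : Euc d} (hy : y ∈ Ω) : ∃ r, r ∈ subdiff Ω u y := by
  classical
  set E : Set (Euc d × ℝ) := {q | q.1 ∈ Ω ∧ u q.1 < q.2} with hE
  have hEopen : IsOpen E := by
    have hEeq : E = (Ω ×ˢ (Set.univ : Set ℝ)) ∩
        (fun q : Euc d × ℝ => q.2 - u q.1) ⁻¹' (Set.Ioi 0) := by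
      ext q; simp [hE, sub_pos, and_comm]
    rw [hEeq]
    refine ContinuousOn.isOpen_inter_preimage ?_ (hop.prod isOpen_univ) isOpen_Ioi
    exact continuous_snd.continuousOn.sub
      (huc.comp continuous_fst.continuousOn (fun q hq => hq.1))
  have hEconv : Convex ℝ E := by
    rintro ⟨z₁, t₁⟩ ⟨hz₁, ht₁⟩ ⟨z₂, t₂⟩ ⟨hz₂, ht₂⟩ a b ha hb hab
    refine ⟨hcv hz₁ hz₂ ha hb hab, ?_⟩
    calc u (a • z₁ + b • z₂) ≤ a * u z₁ + b * u z₂ := hucv.2 hz₁ hz₂ ha hb hab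
    _ < a * t₁ + b * t₂ := by
        rcases eq_or_lt_of_le ha with rfl | ha'
        · simpa using mul_lt_mul_of_pos_left ht₂ (by linarith)
        · rcases eq_or_lt_of_le hb with rfl | hb'
          · simpa using mul_lt_mul_of_pos_left ht₁ (by linarith)
          · exact add_lt_add (mul_lt_mul_of_pos_left ht₁ ha')
              (mul_lt_mul_of_pos_left ht₂ hb')
  have hyE : ((y, u y) : Euc d × ℝ) ∉ E := by simp [hE]
  obtain ⟨f, hf⟩ := geometric_hahn_banach_open_point hEconv hEopen hyE
  -- decompose f
  have hdecomp : ∀ z : Euc d, ∀ t : ℝ, f (z, t) = f (z, 0) + t * f (0, 1) := by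
    intro z t
    have : ((z, t) : Euc d × ℝ) = (z, 0) + t • ((0 : Euc d), (1 : ℝ)) := by
      simp [Prod.ext_iff]
    rw [this, map_add, f.map_smul, smul_eq_mul]
  have hβ : f (0, 1) < 0 := by
    have h1 := hf (y, u y + 1) ⟨hy, by show u y < u y + 1; linarith⟩
    rw [hdecomp y (u y + 1), hdecomp y (u y)] at h1
    nlinarith
  set β := f (0, 1) with hβdef
  have hβneg : 0 < -β := by linarith
  -- key inequality : ∀ z ∈ Ω, f(z,0) + β * u z ≤ f(y,0) + β * u y
  have hkey : ∀ z ∈ Ω, f (z, 0) + β * u z ≤ f (y, 0) + β * u y := by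
    intro z hz
    by_contra hcon
    push_neg at hcon
    have hδ : 0 < (f (z, 0) + β * u z - (f (y, 0) + β * u y)) / (-β) := by
      apply div_pos (by linarith) (by linarith)
    set δ := (f (z, 0) + β * u z - (f (y, 0) + β * u y)) / (-β) with hδdef
    have h2 := hf (z, u z + δ) ⟨hz, by show u z < u z + δ; linarith⟩
    rw [hdecomp z (u z + δ), hdecomp y (u y)] at h2
    have hdmul : δ * (-β) = f (z, 0) + β * u z - (f (y, 0) + β * u y) :=
      div_mul_cancel₀ _ (ne_of_gt hβneg)
    nlinarith
  -- build the subgradient vector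
  set G : Euc d →L[ℝ] ℝ := f.comp (ContinuousLinearMap.inl ℝ (Euc d) ℝ) with hG
  refine ⟨(-β)⁻¹ • ((InnerProductSpace.toDual ℝ (Euc d)).symm G), ?_⟩
  intro z hz
  have hGz : ∀ w : Euc d, ⟪(InnerProductSpace.toDual ℝ (Euc d)).symm G, w⟫ = f (w, 0) := by
    intro w
    have := InnerProductSpace.toDual_symm_apply (𝕜 := ℝ) (x := w) (y := G)
    simpa [hG] using this
  have hinner : ⟪(-β)⁻¹ • ((InnerProductSpace.toDual ℝ (Euc d)).symm G), z - y⟫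
      = (-β)⁻¹ * (f (z - y, 0)) := by
    rw [real_inner_smul_left, hGz]
  have hfsub : f ((z - y : Euc d), (0:ℝ)) = f (z, 0) - f (y, 0) := by
    have : ((z - y, (0:ℝ)) : Euc d × ℝ) = (z, 0) - (y, 0) := by simp [Prod.ext_iff]
    rw [this, map_sub]
  rw [hinner, hfsub]
  have hz' := hkey z hz
  have h3 : f (z, 0) - f (y, 0) ≤ (-β) * (u z - u y) := by nlinarith
  have h4 : (-β)⁻¹ * (f (z, 0) - f (y, 0)) ≤ (-β)⁻¹ * ((-β) * (u z - u y)) :=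
    mul_le_mul_of_nonneg_left h3 (le_of_lt (inv_pos.2 hβneg))
  rw [← mul_assoc, inv_mul_cancel₀ (ne_of_gt hβneg), one_mul] at h4
  linarith

end Aux
section Aux2

variable {d : ℕ}

/-- Legendre transform restricted to `Ω`. -/
def conjF (Ω : Set (Euc d)) (u : Euc d → ℝ) (q : Euc d) : ℝ :=
  sSup ((fun z => (inner ℝ q z : ℝ) - u z) '' Ω)

variable {Ω : Set (Euc d)} {u : Euc d → ℝ}

lemma conjF_bddAbove {R L : ℝ} {p₀ : Euc d} (hR : ∀ z ∈ Ω, ‖z‖ ≤ R)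
    (hlb : ∀ z ∈ Ω, L + (inner ℝ p₀ z : ℝ) ≤ u z) (q : Euc d) :
    BddAbove ((fun z => (inner ℝ q z : ℝ) - u z) '' Ω) := by
  refine ⟨‖q - p₀‖ * R - L, ?_⟩
  rintro t ⟨z, hz, rfl⟩
  have h1 : (inner ℝ q z : ℝ) - u z ≤ (inner ℝ q z : ℝ) - L - (inner ℝ p₀ z : ℝ) := by
    have := hlb z hz; linarith
  have h2 : (inner ℝ q z : ℝ) - (inner ℝ p₀ z : ℝ) = (inner ℝ (q - p₀) z : ℝ) := by
    rw [inner_sub_left]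
  have h3 : (inner ℝ (q - p₀) z : ℝ) ≤ ‖q - p₀‖ * ‖z‖ := real_inner_le_norm _ _
  have h4 : ‖q - p₀‖ * ‖z‖ ≤ ‖q - p₀‖ * R :=
    mul_le_mul_of_nonneg_left (hR z hz) (norm_nonneg _)
  simp only [mem_setOf_eq]
  linarith

lemma le_conjF {R L : ℝ} {p₀ : Euc d} (hR : ∀ z ∈ Ω, ‖z‖ ≤ R)
    (hlb : ∀ z ∈ Ω, L + (inner ℝ p₀ z : ℝ) ≤ u z) {q z : Euc d} (hz : z ∈ Ω) :
    (inner ℝ q z : ℝ) - u z ≤ conjF Ω u q :=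
  le_csSup (conjF_bddAbove hR hlb q) ⟨z, hz, rfl⟩

lemma conjF_le (hne : Ω.Nonempty) {q : Euc d} {M : ℝ}
    (h : ∀ z ∈ Ω, (inner ℝ q z : ℝ) - u z ≤ M) : conjF Ω u q ≤ M := by
  apply csSup_le (hne.image _)
  rintro t ⟨z, hz, rfl⟩; exact h z hz

lemma conjF_lipschitz (hne : Ω.Nonempty) {R L : ℝ} {p₀ : Euc d}
    (hR : ∀ z ∈ Ω, ‖z‖ ≤ R)
    (hlb : ∀ z ∈ Ω, L + (inner ℝ p₀ z : ℝ) ≤ u z) :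
    LipschitzWith (Real.toNNReal R) (conjF Ω u) := by
  have hR0 : 0 ≤ R := by
    obtain ⟨z, hz⟩ := hne
    exact le_trans (norm_nonneg z) (hR z hz)
  apply LipschitzWith.of_dist_le_mul
  intro q₁ q₂
  have key : ∀ q q' : Euc d, conjF Ω u q ≤ conjF Ω u q' + R * ‖q - q'‖ := by
    intro q q'
    apply conjF_le hne
    intro z hz
    have h1 : (inner ℝ q z : ℝ) - u z
        = ((inner ℝ q' z : ℝ) - u z) + (inner ℝ (q - q') z : ℝ) := by
      rw [inner_sub_left]; ring
    have h2 : (inner ℝ (q - q') z : ℝ) ≤ ‖q - q'‖ * ‖z‖ := real_inner_le_norm _ _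
    have h3 : ‖q - q'‖ * ‖z‖ ≤ ‖q - q'‖ * R :=
      mul_le_mul_of_nonneg_left (hR z hz) (norm_nonneg _)
    have h4 := le_conjF hR hlb (q := q') hz
    rw [h1]
    calc ((inner ℝ q' z : ℝ) - u z) + (inner ℝ (q - q') z : ℝ)
        ≤ conjF Ω u q' + ‖q - q'‖ * R := by linarith
      _ = conjF Ω u q' + R * ‖q - q'‖ := by ring
  rw [Real.dist_eq, abs_sub_le_iff, Real.coe_toNNReal R hR0, dist_eq_norm]
  constructor
  · have := key q₁ q₂; linarith
  · have := key q₂ q₁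
    rw [norm_sub_rev] at this
    linarith

/-- `x` is a "contact point" for slope `p`: the Legendre transform has `x` in its
subdifferential at `p`. -/
def SG (Ω : Set (Euc d)) (u : Euc d → ℝ) (p x : Euc d) : Prop :=
  ∀ q : Euc d, conjF Ω u p + (inner ℝ x (q - p) : ℝ) ≤ conjF Ω u q

lemma SG.inner_eq {p x : Euc d} (hdiff : DifferentiableAt ℝ (conjF Ω u) p)
    (hx : SG Ω u p x) (v : Euc d) :
    (inner ℝ x v : ℝ) = fderiv ℝ (conjF Ω u) p v := by
  have hder : HasDerivAt (fun t : ℝ => conjF Ω u (p + t • v))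
      (fderiv ℝ (conjF Ω u) p v) 0 := by
    have h1 : HasDerivAt (fun t : ℝ => p + t • v) v 0 := by
      simpa using ((hasDerivAt_id (0:ℝ)).smul_const v).const_add p
    have h2 : HasFDerivAt (conjF Ω u) (fderiv ℝ (conjF Ω u) p) (p + (0:ℝ) • v) := by
      simpa using hdiff.hasFDerivAt
    exact h2.comp_hasDerivAt 0 h1
  set φ : ℝ → ℝ := fun t => conjF Ω u (p + t • v) with hφ
  have hslope := hasDerivAt_iff_tendsto_slope.1 hder
  have hineq : ∀ t : ℝ, t * (inner ℝ x v : ℝ) ≤ φ t - φ 0 := by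
    intro t
    have h3 := hx (p + t • v)
    have h2 : (inner ℝ x ((p + t • v) - p) : ℝ) = t * (inner ℝ x v : ℝ) := by
      rw [add_sub_cancel_left, real_inner_smul_right]
    rw [h2] at h3
    have hφ0 : φ 0 = conjF Ω u p := by simp [hφ]
    have hφt : φ t = conjF Ω u (p + t • v) := rfl
    rw [hφ0, hφt]
    linarith
  have hle : (inner ℝ x v : ℝ) ≤ fderiv ℝ (conjF Ω u) p v := by
    have hmono : (𝓝[>] (0:ℝ)) ≤ 𝓝[≠] (0:ℝ) :=
      nhdsWithin_mono 0 (fun t (ht : 0 < t) => ne_of_gt ht)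
    refine ge_of_tendsto (hslope.mono_left hmono) ?_
    · filter_upwards [self_mem_nhdsWithin] with t (ht : 0 < t)
      have := hineq t
      rw [slope_def_field]
      show (inner ℝ x v:ℝ) ≤ (φ t - φ 0) / (t - 0)
      rw [sub_zero, le_div_iff₀ ht]
      linarith [hineq t]
  have hge : fderiv ℝ (conjF Ω u) p v ≤ (inner ℝ x v : ℝ) := by
    have hmono : (𝓝[<] (0:ℝ)) ≤ 𝓝[≠] (0:ℝ) :=
      nhdsWithin_mono 0 (fun t (ht : t < 0) => ne_of_lt ht)
    refine le_of_tendsto (hslope.mono_left hmono) ?_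
    · filter_upwards [self_mem_nhdsWithin] with t (ht : t < 0)
      rw [slope_def_field]
      show (φ t - φ 0) / (t - 0) ≤ (inner ℝ x v:ℝ)
      rw [sub_zero, div_le_iff_of_neg ht]
      linarith [hineq t]
  linarith

lemma SG.eq {p x y : Euc d} (hdiff : DifferentiableAt ℝ (conjF Ω u) p)
    (hx : SG Ω u p x) (hy : SG Ω u p y) : x = y := by
  have h : ∀ v : Euc d, (inner ℝ (x - y) v : ℝ) = 0 := by
    intro v
    rw [inner_sub_left, hx.inner_eq hdiff, hy.inner_eq hdiff, sub_self]
  have := h (x - y)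
  rwa [inner_self_eq_zero, sub_eq_zero] at this

end Aux2
section Aux3

variable {d : ℕ} {Ω : Set (Euc d)} {u : Euc d → ℝ}

lemma ereal_le_of_forall_eps {x : EReal} {M : ℝ}
    (h : ∀ ε : ℝ, 0 < ε → x ≤ ((M + ε : ℝ) : EReal)) : x ≤ (M : EReal) := by
  by_contra hc
  push_neg at hc
  obtain ⟨b, hb1, hb2⟩ := EReal.lt_iff_exists_real_btwn.1 hc
  have := h (b - M) (by exact_mod_cast sub_pos.2 (by exact_mod_cast hb1))
  rw [show M + (b - M) = b by ring] at this
  exact absurd (lt_of_le_of_lt this hb2) (lt_irrefl _)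

lemma ereal_ge_of_forall_eps {x : EReal} {M : ℝ}
    (h : ∀ ε : ℝ, 0 < ε → ((M - ε : ℝ) : EReal) ≤ x) : (M : EReal) ≤ x := by
  by_contra hc
  push_neg at hc
  obtain ⟨b, hb1, hb2⟩ := EReal.lt_iff_exists_real_btwn.1 hc
  have := h (M - b) (by exact_mod_cast sub_pos.2 (by exact_mod_cast hb2))
  rw [show M - (M - b) = b by ring] at this
  exact absurd (lt_of_lt_of_le hb1 this) (lt_irrefl _)

lemma term_le_extFun {y q x : Euc d} (hy : y ∈ Ω) (hq : q ∈ subdiff Ω u y) :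
    ((u y + (inner ℝ q (x - y) : ℝ) : ℝ) : EReal) ≤ extFun Ω u x := by
  calc ((u y + (inner ℝ q (x - y) : ℝ) : ℝ) : EReal)
      ≤ ⨆ q' ∈ subdiff Ω u y, ((u y + (inner ℝ q' (x - y) : ℝ) : ℝ) : EReal) :=
        le_iSup₂ (f := fun q' (_ : q' ∈ subdiff Ω u y) =>
          ((u y + (inner ℝ q' (x - y) : ℝ) : ℝ) : EReal)) q hq
    _ ≤ extFun Ω u x :=
        le_iSup₂ (f := fun y' (_ : y' ∈ Ω) =>
          ⨆ q' ∈ subdiff Ω u y', ((u y' + (inner ℝ q' (x - y') : ℝ) : ℝ) : EReal)) y hy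

lemma SG_of_subdiff (hne : Ω.Nonempty) {R L : ℝ} {p₀ : Euc d}
    (hR : ∀ z ∈ Ω, ‖z‖ ≤ R) (hlb : ∀ z ∈ Ω, L + (inner ℝ p₀ z : ℝ) ≤ u z)
    {p x : Euc d} (hx : x ∈ Ω) (hp : p ∈ subdiff Ω u x) : SG Ω u p x := by
  intro q
  have h1 : conjF Ω u p ≤ (inner ℝ p x : ℝ) - u x := by
    apply conjF_le hne
    intro z hz
    have h := hp z hz
    rw [inner_sub_right] at h
    linarith [h]
  have h2 : (inner ℝ q x : ℝ) - u x ≤ conjF Ω u q := le_conjF hR hlb hx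
  have h3 : (inner ℝ x (q - p) : ℝ) = (inner ℝ q x : ℝ) - (inner ℝ p x : ℝ) := by
    rw [inner_sub_right, real_inner_comm x q, real_inner_comm x p]
  linarith

lemma coe_le_extFun (hop : IsOpen Ω) (hcv : Convex ℝ Ω) (hne : Ω.Nonempty)
    (huc : ContinuousOn u Ω) (hucv : ConvexOn ℝ Ω u)
    {R L : ℝ} {p₀ : Euc d} (hR : ∀ z ∈ Ω, ‖z‖ ≤ R)
    (hlb : ∀ z ∈ Ω, L + (inner ℝ p₀ z : ℝ) ≤ u z)
    {x : Euc d} (hx : x ∈ closure Ω) (q : Euc d) :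
    (((inner ℝ q x : ℝ) - conjF Ω u q : ℝ) : EReal) ≤ extFun Ω u x := by
  classical
  by_contra hcon
  push_neg at hcon
  set r : ℝ := (inner ℝ q x : ℝ) - conjF Ω u q with hr
  obtain ⟨A, hA1, hA2⟩ := EReal.lt_iff_exists_real_btwn.1 hcon
  set ε : ℝ := r - A with hε
  have hεpos : 0 < ε := sub_pos.2 (by exact_mod_cast hA2)
  obtain ⟨w, hw⟩ := hne
  set z : ℝ → Euc d := fun t => t • w + (1 - t) • x with hz
  have hzΩ : ∀ t : ℝ, 0 < t → t ≤ 1 → z t ∈ Ω := by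
    intro t ht0 ht1
    have := hcv.combo_interior_closure_mem_interior (x := w) (y := x)
      (a := t) (b := 1 - t) (by rwa [hop.interior_eq]) hx ht0 (by linarith) (by ring)
    rwa [hop.interior_eq] at this
  set g : ℝ → ℝ := fun t => u (z t) with hg
  -- difference identities
  have hzsub : ∀ t : ℝ, z t - x = t • (w - x) := by
    intro t; simp only [hz]; module
  have hzsub2 : ∀ t : ℝ, z (2*t) - z t = t • (w - x) := by
    intro t; simp only [hz]; module
  set C : ℝ := |(inner ℝ q (w - x) : ℝ)| with hC
  -- (F1) : lower bound on g
  have hF1 : ∀ t : ℝ, 0 < t → t ≤ 1 → r - t * C ≤ g t := by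
    intro t ht0 ht1
    have h1 : (inner ℝ q (z t) : ℝ) - u (z t) ≤ conjF Ω u q :=
      le_conjF hR hlb (hzΩ t ht0 ht1)
    have h2 : (inner ℝ q (z t) : ℝ) = (inner ℝ q x : ℝ) + t * (inner ℝ q (w - x) : ℝ) := by
      have : (inner ℝ q (z t - x) : ℝ) = t * (inner ℝ q (w - x) : ℝ) := by
        rw [hzsub t, real_inner_smul_right]
      rw [inner_sub_right] at this
      linarith
    have h3 : t * (inner ℝ q (w - x) : ℝ) ≥ -(t * C) := by
      have : (inner ℝ q (w - x) : ℝ) ≥ -C := neg_abs_le _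
      nlinarith
    simp only [hg, hr] at *
    linarith
  -- (F2) : doubling bound
  have hF2 : ∀ t : ℝ, 0 < t → t ≤ 1/2 → 2 * g t - g (2*t) ≤ A := by
    intro t ht0 ht1
    obtain ⟨rt, hrt⟩ := exists_subgrad hop hcv huc hucv (hzΩ t ht0 (by linarith))
    have hterm : ((u (z t) + (inner ℝ rt (x - z t) : ℝ) : ℝ) : EReal) ≤ extFun Ω u x :=
      term_le_extFun (hzΩ t ht0 (by linarith)) hrt
    have hterm2 : u (z t) + (inner ℝ rt (x - z t) : ℝ) ≤ A := by
      have := lt_of_le_of_lt hterm hA1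
      exact_mod_cast le_of_lt this
    have hsub := hrt (z (2*t)) (hzΩ (2*t) (by linarith) (by linarith))
    -- u (z t) + ⟪rt, z 2t - z t⟫ ≤ u (z 2t)
    have h4 : (inner ℝ rt (z (2*t) - z t) : ℝ) = t * (inner ℝ rt (w - x) : ℝ) := by
      rw [hzsub2 t, real_inner_smul_right]
    have h5 : (inner ℝ rt (x - z t) : ℝ) = -(t * (inner ℝ rt (w - x) : ℝ)) := by
      have : x - z t = -(t • (w - x)) := by rw [← hzsub t, neg_sub]
      rw [this, inner_neg_right, real_inner_smul_right]
    rw [h4] at hsub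
    rw [h5] at hterm2
    simp only [hg]
    linarith
  -- threshold
  set t₁ : ℝ := min (1/2) (ε / (2 * (C + 1))) with ht₁
  have hC0 : 0 ≤ C := abs_nonneg _
  have ht₁pos : 0 < t₁ := lt_min (by norm_num) (div_pos hεpos (by linarith))
  have ht₁half : t₁ ≤ 1/2 := min_le_left _ _
  have hglow : ∀ t : ℝ, 0 < t → t ≤ t₁ → A + ε/2 ≤ g t := by
    intro t ht0 ht1
    have h1 : t * C ≤ t₁ * (C + 1) := by nlinarith
    have h2 : t₁ * (C + 1) ≤ ε / 2 := by
      have hmin : t₁ ≤ ε / (2 * (C + 1)) := min_le_right _ _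
      have hpos : (0:ℝ) < 2 * (C + 1) := by linarith
      have heq : (ε / (2 * (C + 1))) * (C + 1) = ε / 2 := by
        field_simp
      calc t₁ * (C + 1) ≤ (ε / (2 * (C + 1))) * (C + 1) := by nlinarith
        _ = ε / 2 := heq
    have := hF1 t ht0 (by linarith)
    have hrA : r = A + ε := by rw [hε]; ring
    linarith
  have hstep : ∀ t : ℝ, 0 < t → t ≤ t₁ → g t + ε/2 ≤ g (2*t) := by
    intro t ht0 ht1
    have := hF2 t ht0 (by linarith)
    have := hglow t ht0 ht1
    linarith
  have hiter : ∀ n : ℕ, g (t₁ / 2^n) + n * (ε/2) ≤ g t₁ := by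
    intro n
    induction n with
    | zero => simp
    | succ n ih =>
      have hpow : (0:ℝ) < 2^(n+1) := by positivity
      have h0 : 0 < t₁ / 2^(n+1) := div_pos ht₁pos hpow
      have h1 : t₁ / 2^(n+1) ≤ t₁ := by
        apply div_le_self (le_of_lt ht₁pos)
        have : (1:ℝ) ≤ 2^(n+1) := one_le_pow₀ (by norm_num : (1:ℝ) ≤ 2)
        linarith
      have h2 := hstep _ h0 h1
      have h3 : 2 * (t₁ / 2^(n+1)) = t₁ / 2^n := by
        field_simp
        ring
      rw [h3] at h2
      push_cast
      have := ih
      push_cast at this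
      linarith
  obtain ⟨n, hn⟩ := exists_nat_gt ((g t₁ - (A + ε/2)) / (ε/2))
  have h1 := hiter n
  have h2 := hglow (t₁ / 2^n) (div_pos ht₁pos (by positivity))
    (by
      apply div_le_self (le_of_lt ht₁pos)
      have : (1:ℝ) ≤ 2^n := one_le_pow₀ (by norm_num : (1:ℝ) ≤ 2)
      linarith)
  rw [div_lt_iff₀ (by linarith : (0:ℝ) < ε/2)] at hn
  linarith

end Aux3
section Aux4

variable {d : ℕ}

lemma abs_coord_le_norm (x : Euc d) (i : Fin d) : |x i| ≤ ‖x‖ := by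
  rw [EuclideanSpace.norm_eq]
  have h1 : |x i| = Real.sqrt (‖x i‖^2) := by
    rw [Real.sqrt_sq_eq_abs]; simp [Real.norm_eq_abs, abs_abs]
  rw [h1]
  apply Real.sqrt_le_sqrt
  apply Finset.single_le_sum (f := fun j => ‖x j‖^2) (fun j _ => by positivity)
    (Finset.mem_univ i)

def roundPt (h : ℝ) (x : Euc d) : Euc d :=
  (EuclideanSpace.equiv (Fin d) ℝ).symm (fun i => h * round (x i / h))

lemma roundPt_apply (h : ℝ) (x : Euc d) (i : Fin d) :
    roundPt h x i = h * round (x i / h) := rfl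

lemma roundPt_mem_latt (h : ℝ) (x : Euc d) : roundPt h x ∈ latt d h := by
  intro i
  exact ⟨round (x i / h), by rw [roundPt_apply]; exact mul_comm _ _⟩

lemma roundPt_dist {h : ℝ} (hh : 0 < h) (x : Euc d) :
    ‖roundPt h x - x‖ ≤ Real.sqrt d * h := by
  have hcoord : ∀ i, ‖(roundPt h x - x) i‖ ≤ h / 2 := by
    intro i
    have h1 : (roundPt h x - x) i = h * round (x i / h) - x i := rfl
    rw [h1, Real.norm_eq_abs]
    have h2 : h * (round (x i / h) : ℝ) - x i = h * ((round (x i / h) : ℝ) - x i / h) := by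
      field_simp
    rw [h2, abs_mul, abs_of_pos hh, abs_sub_comm]
    have h3 : |x i / h - (round (x i / h) : ℝ)| ≤ 1/2 := abs_sub_round _
    nlinarith
  calc ‖roundPt h x - x‖ = Real.sqrt (∑ i, ‖(roundPt h x - x) i‖^2) :=
        EuclideanSpace.norm_eq _
    _ ≤ Real.sqrt (∑ _i : Fin d, (h/2)^2) := by
        apply Real.sqrt_le_sqrt
        apply Finset.sum_le_sum
        intro i _
        exact pow_le_pow_left₀ (norm_nonneg _) (hcoord i) 2
    _ = Real.sqrt (d * (h/2)^2) := by
        simp [Finset.sum_const, Finset.card_univ, nsmul_eq_mul]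
    _ ≤ Real.sqrt d * h := by
        rw [Real.sqrt_mul (by positivity), Real.sqrt_sq (by positivity)]
        have : Real.sqrt d * (h/2) ≤ Real.sqrt d * h := by
          apply mul_le_mul_of_nonneg_left (by linarith) (Real.sqrt_nonneg _)
        linarith

lemma tendsto_roundPt {hs : ℕ → ℝ} (hpos : ∀ n, 0 < hs n)
    (h0 : Filter.Tendsto hs Filter.atTop (𝓝 0)) (x : Euc d) :
    Filter.Tendsto (fun n => roundPt (hs n) x) Filter.atTop (𝓝 x) := by
  rw [tendsto_iff_dist_tendsto_zero]
  have hb : ∀ n, dist (roundPt (hs n) x) x ≤ Real.sqrt d * hs n := by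
    intro n
    rw [dist_eq_norm]
    exact roundPt_dist (hpos n) x
  exact squeeze_zero (fun n => dist_nonneg) hb
    (by simpa using h0.const_mul (Real.sqrt d))

lemma meshΩ_finite {Ω : Set (Euc d)} (hbd : Bornology.IsBounded Ω) {h : ℝ} (hh : 0 < h) :
    (meshΩ Ω h).Finite := by
  classical
  obtain ⟨R, hR⟩ := hbd.subset_closedBall 0
  set M : ℤ := ⌈R / h⌉ with hM
  have hsub : meshΩ Ω h ⊆
      (fun m : Fin d → ℤ =>
        ((EuclideanSpace.equiv (Fin d) ℝ).symm fun i => ((m i : ℝ) * h))) ''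
      (Set.univ.pi fun _ : Fin d => Set.Icc (-M) M) := by
    rintro x ⟨hxΩ, hxl⟩
    choose m hm using hxl
    refine ⟨m, ?_, ?_⟩
    · intro i _
      have hx1 : ‖x‖ ≤ R := by
        have := hR hxΩ
        simpa [Metric.mem_closedBall, dist_eq_norm] using this
      have hx2 : |x i| ≤ R := le_trans (abs_coord_le_norm x i) hx1
      have hx3 : |(m i : ℝ)| * h ≤ R := by
        rw [← abs_of_pos hh, ← abs_mul, ← hm i]; exact hx2
      have hx4 : |(m i : ℝ)| ≤ R / h := by
        rw [le_div_iff₀ hh]; exact hx3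
      have hx5 : ((|m i| : ℤ) : ℝ) ≤ (M : ℝ) := by
        push_cast
        exact le_trans hx4 (Int.le_ceil _)
      have hx6 : |m i| ≤ M := by exact_mod_cast hx5
      rw [Set.mem_Icc]
      exact abs_le.1 hx6
    · ext i
      exact (hm i).symm
  exact Set.Finite.subset
    ((Set.Finite.pi fun _ => Set.finite_Icc _ _).image _) hsub

lemma uh_tendsto {Ω : Set (Euc d)} (hop : IsOpen Ω)
    {u : Euc d → ℝ} (huc : ContinuousOn u Ω) {uh : ℝ → Euc d → ℝ} {B : ℝ → Set (Euc d)}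
    (hcvg : ∀ K : Set (Euc d), IsCompact K → K ⊆ Ω → ∀ ε : ℝ, 0 < ε →
      ∃ h₀ : ℝ, 0 < h₀ ∧ ∀ h : ℝ, 0 < h → h < h₀ →
        ∀ x ∈ (meshΩ Ω h ∪ B h) ∩ K, |uh h x - u x| < ε)
    {hs : ℕ → ℝ} (hpos : ∀ n, 0 < hs n) (h0 : Filter.Tendsto hs Filter.atTop (𝓝 0))
    {W : ℕ → Euc d} {w : Euc d} (hw : w ∈ Ω)
    (hWmem : ∀ᶠ n in Filter.atTop, W n ∈ meshΩ Ω (hs n) ∪ B (hs n))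
    (hWlim : Filter.Tendsto W Filter.atTop (𝓝 w)) :
    Filter.Tendsto (fun n => uh (hs n) (W n)) Filter.atTop (𝓝 (u w)) := by
  rw [Metric.tendsto_nhds]
  intro ε hε
  obtain ⟨δ, hδpos, hδ⟩ := Metric.isOpen_iff.1 hop w hw
  have hsub : Metric.closedBall w (δ/2) ⊆ Ω := by
    intro x hx
    have hx' : dist x w ≤ δ/2 := Metric.mem_closedBall.1 hx
    exact hδ (Metric.mem_ball.2 (by linarith))
  obtain ⟨h₀, hh₀pos, hh₀⟩ := hcvg (Metric.closedBall w (δ/2))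
    (isCompact_closedBall _ _) hsub (ε/2) (by linarith)
  have hev1 : ∀ᶠ n in Filter.atTop, hs n < h₀ := h0.eventually (gt_mem_nhds hh₀pos)
  have hev2 : ∀ᶠ n in Filter.atTop, W n ∈ Metric.closedBall w (δ/2) :=
    hWlim.eventually (Metric.closedBall_mem_nhds w (by linarith))
  have hucont : Filter.Tendsto (fun n => u (W n)) Filter.atTop (𝓝 (u w)) :=
    ((huc.continuousAt (hop.mem_nhds hw)).tendsto).comp hWlim
  have hev3 : ∀ᶠ n in Filter.atTop, dist (u (W n)) (u w) < ε/2 :=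
    (Metric.tendsto_nhds.1 hucont) (ε/2) (by linarith)
  filter_upwards [hev1, hev2, hev3, hWmem] with n h1 h2 h3 h4
  have h5 := hh₀ (hs n) (hpos n) h1 (W n) ⟨h4, h2⟩
  rw [Real.dist_eq] at h3 ⊢
  have : |uh (hs n) (W n) - u w| ≤ |uh (hs n) (W n) - u (W n)| + |u (W n) - u w| :=
    abs_sub_le _ _ _
  linarith

lemma envelope_subgrad {N : Set (Euc d)} (hfin : N.Finite) (hne : N.Nonempty)
    (v : Euc d → ℝ) (p y₀ : Euc d) (hy₀ : y₀ ∈ N)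
    (hmin : ∀ z ∈ N, v y₀ - (inner ℝ p y₀ : ℝ) ≤ v z - (inner ℝ p z : ℝ)) :
    p ∈ subdiff (convexHull ℝ N) (convEnv N v) y₀ := by
  classical
  set c : ℝ := v y₀ - (inner ℝ p y₀ : ℝ) with hc
  have hadm : ∀ y ∈ N, (inner ℝ p y : ℝ) + c ≤ v y := by
    intro y hy
    have := hmin y hy
    linarith
  -- upper bound for admissible affine functions on the convex hull
  obtain ⟨M, hM⟩ : ∃ M : ℝ, ∀ y ∈ N, v y ≤ M := by
    obtain ⟨M, hM⟩ := (hfin.image v).bddAbove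
    exact ⟨M, fun y hy => hM ⟨y, hy, rfl⟩⟩
  have hbdd : ∀ z ∈ convexHull ℝ N, BddAbove {t | ∃ (p' : Euc d) (c' : ℝ),
      (∀ y ∈ N, (inner ℝ p' y : ℝ) + c' ≤ v y) ∧ t = (inner ℝ p' z : ℝ) + c'} := by
    intro z hz
    refine ⟨M, ?_⟩
    rintro t ⟨p', c', hp', rfl⟩
    have hhalf : convexHull ℝ N ⊆ {w | (inner ℝ p' w : ℝ) + c' ≤ M} := by
      apply convexHull_min
      · intro y hy
        exact le_trans (hp' y hy) (hM y hy)
      · have : Convex ℝ {w : Euc d | (inner ℝ p' w : ℝ) ≤ M - c'} :=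
          convex_halfSpace_le (by exact (innerSL ℝ p').toLinearMap.isLinear) (M - c')
        convert this using 1
        ext w
        simp only [Set.mem_setOf_eq]
        exact Set.ext fun w => ⟨fun h => by simp only [Set.mem_setOf_eq] at h ⊢; linarith,
          fun h => by simp only [Set.mem_setOf_eq] at h ⊢; linarith⟩
    have := hhalf hz
    exact this
  have hnonempty : ∀ z : Euc d, ({t | ∃ (p' : Euc d) (c' : ℝ),
      (∀ y ∈ N, (inner ℝ p' y : ℝ) + c' ≤ v y) ∧ t = (inner ℝ p' z : ℝ) + c'}).Nonempty :=
    fun z => ⟨(inner ℝ p z : ℝ) + c, p, c, hadm, rfl⟩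
  intro z hz
  have h1 : (inner ℝ p z : ℝ) + c ≤ convEnv N v z :=
    le_csSup (hbdd z hz) ⟨p, c, hadm, rfl⟩
  have h2 : convEnv N v y₀ ≤ (inner ℝ p y₀ : ℝ) + c := by
    apply csSup_le (hnonempty y₀)
    rintro t ⟨p', c', hp', rfl⟩
    have := hp' y₀ hy₀
    simp only [hc]
    linarith
  have h3 : (inner ℝ p (z - y₀) : ℝ) = (inner ℝ p z : ℝ) - (inner ℝ p y₀ : ℝ) :=
    inner_sub_right _ _ _
  linarith

end Aux4

/-- if `u_h → u` uniformly on compact subsets of `Ω` with `u` continuous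
convex, `K ⊂ U ⊆ closure U ⊂ Ω` with `K` compact and `U` open, and the boundary condition
`liminf ũ(z_{k_j}) ≤ limsup u_{h_{k_j}}(z_{k_j})` holds for all node sequences converging to a
boundary point, then, for any sequence `h_k → 0`, the set
`∂u(K) \ (⋃ n, ⋂ k ≥ n, ∂Γ(u_{h_k})(U ∩ conv N_{h_k}))` is Lebesgue-null. -/
theorem statement12 {d : ℕ} (hd : 1 ≤ d) (Ω : Set (Euc d))
    (hne : Ω.Nonempty) (hbd : Bornology.IsBounded Ω) (hop : IsOpen Ω) (hcv : Convex ℝ Ω)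
    (B : ℝ → Set (Euc d)) (hB : ∀ h : ℝ, 0 < h → (B h).Finite ∧ B h ⊆ frontier Ω)
    (u : Euc d → ℝ) (huc : ContinuousOn u Ω) (hucv : ConvexOn ℝ Ω u)
    (uh : ℝ → Euc d → ℝ)
    (hcvg : ∀ K : Set (Euc d), IsCompact K → K ⊆ Ω → ∀ ε : ℝ, 0 < ε →
      ∃ h₀ : ℝ, 0 < h₀ ∧ ∀ h : ℝ, 0 < h → h < h₀ →
        ∀ x ∈ (meshΩ Ω h ∪ B h) ∩ K, |uh h x - u x| < ε)
    (K : Set (Euc d)) (hK : IsCompact K)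
    (U : Set (Euc d)) (hU : IsOpen U) (hKU : K ⊆ U) (hUΩ : closure U ⊆ Ω)
    (hbc : ∀ hk : ℕ → ℝ, (∀ k, 0 < hk k) → Tendsto hk atTop (𝓝 0) →
      ∀ φ : ℕ → ℕ, StrictMono φ →
      ∀ z : ℕ → Euc d, (∀ j, z j ∈ meshΩ Ω (hk (φ j)) ∪ B (hk (φ j))) →
      ∀ z₀ ∈ frontier Ω, Tendsto z atTop (𝓝 z₀) →
        Filter.liminf (fun j => extFun Ω u (z j)) atTop ≤
          Filter.limsup (fun j => ((uh (hk (φ j)) (z j) : ℝ) : EReal)) atTop) :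
    ∀ hk : ℕ → ℝ, (∀ k, 0 < hk k) → Tendsto hk atTop (𝓝 0) →
    volume ((⋃ x ∈ K, subdiff Ω u x) \
      (⋃ n : ℕ, ⋂ k ∈ Ici n, ⋃ x ∈ U ∩ convexHull ℝ (meshΩ Ω (hk k) ∪ B (hk k)),
        subdiff (convexHull ℝ (meshΩ Ω (hk k) ∪ B (hk k)))
          (convEnv (meshΩ Ω (hk k) ∪ B (hk k)) (uh (hk k))) x)) = 0 := by
  intro hk hkpos hk0
  classical
  set N : ℕ → Set (Euc d) := fun k => meshΩ Ω (hk k) ∪ B (hk k) with hN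
  set A : ℕ → Set (Euc d) := fun k =>
    ⋃ x ∈ U ∩ convexHull ℝ (N k),
      subdiff (convexHull ℝ (N k)) (convEnv (N k) (uh (hk k))) x with hA
  show volume ((⋃ x ∈ K, subdiff Ω u x) \ (⋃ n : ℕ, ⋂ k ∈ Ici n, A k)) = 0
  rcases (⋃ x ∈ K, subdiff Ω u x).eq_empty_or_nonempty with hemp | ⟨p₁, hp₁⟩
  · rw [hemp]; simp
  obtain ⟨x₁, hx₁K, hp₁sub⟩ := mem_iUnion₂.1 hp₁
  have hKΩ : K ⊆ Ω := fun x hx => hUΩ (subset_closure (hKU hx))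
  have hx₁Ω : x₁ ∈ Ω := hKΩ hx₁K
  -- affine lower bound for u
  have hlb : ∀ z ∈ Ω, (u x₁ - (inner ℝ p₁ x₁ : ℝ)) + (inner ℝ p₁ z : ℝ) ≤ u z := by
    intro z hz
    have := hp₁sub z hz
    rw [inner_sub_right] at this
    linarith
  -- uniform bound on Ω
  obtain ⟨R, hRball⟩ := hbd.subset_closedBall 0
  have hR : ∀ z ∈ Ω, ‖z‖ ≤ R := by
    intro z hz
    have := hRball hz
    simpa [Metric.mem_closedBall, dist_eq_norm] using this
  -- the null set
  have hnull : volume {p : Euc d | ¬ DifferentiableAt ℝ (conjF Ω u) p} = 0 := by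
    have hlip := conjF_lipschitz hne hR hlb
    exact ae_iff.1 (hlip.ae_differentiableAt (μ := volume))
  apply measure_mono_null ?_ hnull
  -- the inclusion
  intro p hp
  obtain ⟨hpK, hpnot⟩ := hp
  obtain ⟨x₀, hx₀K, hpx₀⟩ := mem_iUnion₂.1 hpK
  have hx₀Ω : x₀ ∈ Ω := hKΩ hx₀K
  intro hdiff
  -- extraction of bad indices
  have hfreq : ∃ᶠ k in atTop, p ∉ A k := by
    rw [frequently_atTop]
    intro n
    by_contra hcon
    push_neg at hcon
    exact hpnot (mem_iUnion.2 ⟨n, mem_iInter₂.2 fun k hkn => hcon k hkn⟩)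
  obtain ⟨φ₁, hφ₁mono, hφ₁⟩ := extraction_of_frequently_atTop hfreq
  obtain ⟨w₀, hw₀⟩ := id hne
  have hφ₁tend : Tendsto (fun j => hk (φ₁ j)) atTop (𝓝 0) :=
    hk0.comp hφ₁mono.tendsto_atTop
  have hmesh0 : ∀ᶠ j in atTop, roundPt (hk (φ₁ j)) w₀ ∈ Ω :=
    (tendsto_roundPt (fun j => hkpos _) hφ₁tend w₀).eventually (hop.mem_nhds hw₀)
  obtain ⟨j₀, hj₀⟩ := eventually_atTop.1 hmesh0
  set φ₂ : ℕ → ℕ := fun j => φ₁ (j + j₀) with hφ₂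
  have hφ₂mono : StrictMono φ₂ := fun a b hab => hφ₁mono (by omega)
  have hφ₂bad : ∀ j, p ∉ A (φ₂ j) := fun j => hφ₁ _
  have hφ₂ne : ∀ j, (meshΩ Ω (hk (φ₂ j))).Nonempty := by
    intro j
    exact ⟨roundPt (hk (φ₁ (j + j₀))) w₀, hj₀ (j + j₀) (by omega),
      roundPt_mem_latt _ _⟩
  have hNfin : ∀ j, (N (φ₂ j)).Finite := fun j =>
    (meshΩ_finite hbd (hkpos _)).union (hB _ (hkpos _)).1
  have hNne : ∀ j, (N (φ₂ j)).Nonempty := fun j =>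
    (hφ₂ne j).mono subset_union_left
  -- argmin node
  have hargmin : ∀ j, ∃ y ∈ N (φ₂ j), ∀ z ∈ N (φ₂ j),
      uh (hk (φ₂ j)) y - (inner ℝ p y : ℝ) ≤ uh (hk (φ₂ j)) z - (inner ℝ p z : ℝ) := by
    intro j
    obtain ⟨y₀', hy₀'⟩ := hNne j
    obtain ⟨y', hy'mem, hy'min⟩ := (hNfin j).toFinset.exists_min_image
      (fun z => uh (hk (φ₂ j)) z - (inner ℝ p z : ℝ))
      ⟨y₀', (hNfin j).mem_toFinset.2 hy₀'⟩
    exact ⟨y', (hNfin j).mem_toFinset.1 hy'mem,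
      fun z hz => hy'min z ((hNfin j).mem_toFinset.2 hz)⟩
  choose y hyN hymin using hargmin
  -- argmin not in U
  have hyU : ∀ j, y j ∉ U := by
    intro j hyUj
    apply hφ₂bad j
    have hsub := envelope_subgrad (hNfin j) (hNne j) (uh (hk (φ₂ j))) p (y j)
      (hyN j) (hymin j)
    exact mem_iUnion₂.2 ⟨y j, ⟨hyUj, subset_convexHull ℝ _ (hyN j)⟩, hsub⟩
  -- convergent subsequence
  have hclos : IsCompact (closure Ω) := hbd.isCompact_closure
  have hymem : ∀ j, y j ∈ closure Ω := by
    intro j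
    rcases hyN j with h | h
    · exact subset_closure h.1
    · exact frontier_subset_closure ((hB _ (hkpos _)).2 h)
  obtain ⟨xs, hxsmem, ψ, hψmono, hψlim⟩ := hclos.tendsto_subseq hymem
  have hxsU : xs ∉ U := by
    have : ∀ᶠ j in atTop, (y ∘ ψ) j ∈ Uᶜ :=
      Eventually.of_forall fun j => hyU (ψ j)
    exact (hU.isClosed_compl.mem_of_tendsto hψlim this :)
  have hxs_ne : xs ≠ x₀ := fun h => hxsU (h ▸ hKU hx₀K)
  -- renaming of the final subsequence
  set Φ : ℕ → ℕ := fun j => φ₂ (ψ j) with hΦ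
  have hΦmono : StrictMono Φ := hφ₂mono.comp hψmono
  set Y : ℕ → Euc d := fun j => y (ψ j) with hY
  have hYN : ∀ j, Y j ∈ N (Φ j) := fun j => hyN (ψ j)
  have hYmin : ∀ j, ∀ z ∈ N (Φ j),
      uh (hk (Φ j)) (Y j) - (inner ℝ p (Y j) : ℝ) ≤ uh (hk (Φ j)) z - (inner ℝ p z : ℝ) :=
    fun j => hymin (ψ j)
  have hYlim : Tendsto Y atTop (𝓝 xs) := hψlim
  set hs : ℕ → ℝ := fun j => hk (Φ j) with hhs
  have hspos : ∀ j, 0 < hs j := fun j => hkpos _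
  have hs0 : Tendsto hs atTop (𝓝 0) := hk0.comp hΦmono.tendsto_atTop
  -- key estimate
  have E1 : ∀ z ∈ Ω, ∀ ε : ℝ, 0 < ε → ∀ᶠ j in atTop,
      uh (hs j) (Y j) ≤ u z - (inner ℝ p (z - xs) : ℝ) + ε := by
    intro z hz ε hε
    have hZlim : Tendsto (fun j => roundPt (hs j) z) atTop (𝓝 z) :=
      tendsto_roundPt hspos hs0 z
    have hZmesh : ∀ᶠ j in atTop, roundPt (hs j) z ∈ meshΩ Ω (hs j) := by
      filter_upwards [hZlim.eventually (hop.mem_nhds hz)] with j hj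
      exact ⟨hj, roundPt_mem_latt _ _⟩
    have hZuh : Tendsto (fun j => uh (hs j) (roundPt (hs j) z)) atTop (𝓝 (u z)) :=
      uh_tendsto hop huc hcvg hspos hs0 hz
        (hZmesh.mono fun j h => Or.inl h) hZlim
    have hinncont : Continuous (fun v : Euc d => (inner ℝ p v : ℝ)) :=
      continuous_const.inner continuous_id
    have hinn : Tendsto (fun j => (inner ℝ p (roundPt (hs j) z - Y j) : ℝ)) atTop
        (𝓝 (inner ℝ p (z - xs) : ℝ)) :=
      (hinncont.tendsto (z - xs)).comp (hZlim.sub hYlim)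
    have hev1 : ∀ᶠ j in atTop, uh (hs j) (roundPt (hs j) z) ≤ u z + ε/2 := by
      filter_upwards [(Metric.tendsto_nhds.1 hZuh) (ε/2) (by linarith)] with j hj
      rw [Real.dist_eq] at hj
      have := abs_sub_lt_iff.1 hj
      linarith [this.1]
    have hev2 : ∀ᶠ j in atTop,
        (inner ℝ p (z - xs) : ℝ) - ε/2 ≤ (inner ℝ p (roundPt (hs j) z - Y j) : ℝ) := by
      filter_upwards [(Metric.tendsto_nhds.1 hinn) (ε/2) (by linarith)] with j hj
      rw [Real.dist_eq] at hj
      have := abs_sub_lt_iff.1 hj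
      linarith [this.1]
    filter_upwards [hZmesh, hev1, hev2] with j h1 h2 h3
    have hm := hYmin j (roundPt (hs j) z) (Or.inl h1)
    have h4 : (inner ℝ p (roundPt (hs j) z - Y j) : ℝ)
        = (inner ℝ p (roundPt (hs j) z) : ℝ) - (inner ℝ p (Y j) : ℝ) :=
      inner_sub_right _ _ _
    linarith
  -- case on location of xs
  by_cases hxsΩ : xs ∈ Ω
  · -- interior case
    have hYuh : Tendsto (fun j => uh (hs j) (Y j)) atTop (𝓝 (u xs)) :=
      uh_tendsto hop huc hcvg hspos hs0 hxsΩ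
        (Eventually.of_forall fun j => hYN j) hYlim
    have hsubxs : p ∈ subdiff Ω u xs := by
      intro z hz
      have hge : ∀ ε : ℝ, 0 < ε → u xs ≤ u z - (inner ℝ p (z - xs) : ℝ) + ε :=
        fun ε hε => le_of_tendsto hYuh (E1 z hz ε hε)
      have : u xs ≤ u z - (inner ℝ p (z - xs) : ℝ) :=
        le_of_forall_pos_le_add fun ε hε => hge ε hε
      linarith
    have hSG1 : SG Ω u p x₀ := SG_of_subdiff hne hR hlb hx₀Ω hpx₀
    have hSG2 : SG Ω u p xs := SG_of_subdiff hne hR hlb hxsΩ hsubxs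
    exact hxs_ne (SG.eq hdiff hSG2 hSG1)
  · -- boundary case
    have hxsfr : xs ∈ frontier Ω := by
      have hmem : xs ∈ closure Ω \ interior Ω := ⟨hxsmem, by rwa [hop.interior_eq]⟩
      rwa [closure_diff_interior] at hmem
    have hbc' := hbc hk hkpos hk0 Φ hΦmono Y (fun j => hYN j) xs hxsfr hYlim
    -- upper bound on limsup
    have hupper : ∀ z ∈ Ω,
        Filter.limsup (fun j => ((uh (hk (Φ j)) (Y j) : ℝ) : EReal)) atTop ≤
          ((u z - (inner ℝ p (z - xs) : ℝ) : ℝ) : EReal) := by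
      intro z hz
      apply ereal_le_of_forall_eps
      intro ε hε
      have hev := E1 z hz ε hε
      calc Filter.limsup (fun j => ((uh (hk (Φ j)) (Y j) : ℝ) : EReal)) atTop
          ≤ Filter.limsup (fun _ => ((u z - (inner ℝ p (z - xs) : ℝ) + ε : ℝ) : EReal)) atTop :=
            limsup_le_limsup (by filter_upwards [hev] with j hj; exact_mod_cast hj)
        _ = ((u z - (inner ℝ p (z - xs) : ℝ) + ε : ℝ) : EReal) := limsup_const _
    set cE : EReal := Filter.liminf (fun j => extFun Ω u (Y j)) atTop with hcEdef
    have hchain : ∀ z ∈ Ω, cE ≤ ((u z - (inner ℝ p (z - xs) : ℝ) : ℝ) : EReal) :=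
      fun z hz => le_trans hbc' (hupper z hz)
    -- lower bounds for the liminf
    have hlow : ∀ q : Euc d,
        (((inner ℝ q xs : ℝ) - conjF Ω u q : ℝ) : EReal) ≤ cE := by
      intro q
      apply ereal_ge_of_forall_eps
      intro ε hε
      have hinncont : Continuous (fun v : Euc d => (inner ℝ q v : ℝ)) :=
        continuous_const.inner continuous_id
      have hinn : Tendsto (fun j => (inner ℝ q (Y j) : ℝ)) atTop (𝓝 (inner ℝ q xs : ℝ)) :=
        (hinncont.tendsto xs).comp hYlim
      have hev : ∀ᶠ j in atTop,
          (inner ℝ q xs : ℝ) - ε ≤ (inner ℝ q (Y j) : ℝ) := by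
        filter_upwards [(Metric.tendsto_nhds.1 hinn) ε hε] with j hj
        rw [Real.dist_eq] at hj
        have := abs_sub_lt_iff.1 hj
        linarith [this.1]
      calc (((inner ℝ q xs : ℝ) - conjF Ω u q - ε : ℝ) : EReal)
          = Filter.liminf (fun _ : ℕ => (((inner ℝ q xs : ℝ) - conjF Ω u q - ε : ℝ) : EReal)) atTop :=
            (liminf_const _).symm
        _ ≤ cE := by
            refine liminf_le_liminf (f := atTop) ?_
            filter_upwards [hev] with j hj
            calc (((inner ℝ q xs : ℝ) - conjF Ω u q - ε : ℝ) : EReal)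
                ≤ (((inner ℝ q (Y j) : ℝ) - conjF Ω u q : ℝ) : EReal) := by
                  exact_mod_cast by linarith
              _ ≤ extFun Ω u (Y j) :=
                  coe_le_extFun hop hcv hne huc hucv hR hlb (hymem (ψ j)) q
    have hlow2 : ((u x₀ + (inner ℝ p (xs - x₀) : ℝ) : ℝ) : EReal) ≤ cE := by
      apply ereal_ge_of_forall_eps
      intro ε hε
      have hinncont : Continuous (fun v : Euc d => (inner ℝ p (v - x₀) : ℝ)) :=
        continuous_const.inner (continuous_id.sub continuous_const)
      have hinn : Tendsto (fun j => (inner ℝ p (Y j - x₀) : ℝ)) atTop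
          (𝓝 (inner ℝ p (xs - x₀) : ℝ)) :=
        (hinncont.tendsto xs).comp hYlim
      have hev : ∀ᶠ j in atTop,
          (inner ℝ p (xs - x₀) : ℝ) - ε ≤ (inner ℝ p (Y j - x₀) : ℝ) := by
        filter_upwards [(Metric.tendsto_nhds.1 hinn) ε hε] with j hj
        rw [Real.dist_eq] at hj
        have := abs_sub_lt_iff.1 hj
        linarith [this.1]
      calc ((u x₀ + (inner ℝ p (xs - x₀) : ℝ) - ε : ℝ) : EReal)
          = Filter.liminf (fun _ : ℕ => ((u x₀ + (inner ℝ p (xs - x₀) : ℝ) - ε : ℝ) : EReal)) atTop :=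
            (liminf_const _).symm
        _ ≤ cE := by
            refine liminf_le_liminf (f := atTop) ?_
            filter_upwards [hev] with j hj
            calc ((u x₀ + (inner ℝ p (xs - x₀) : ℝ) - ε : ℝ) : EReal)
                ≤ ((u x₀ + (inner ℝ p (Y j - x₀) : ℝ) : ℝ) : EReal) := by
                  exact_mod_cast by linarith
              _ ≤ extFun Ω u (Y j) := term_le_extFun hx₀Ω hpx₀
    -- cE is a finite real
    obtain ⟨z₀, hz₀⟩ := id hne
    have hcE_ne_top : cE ≠ ⊤ := by
      intro h
      have h2 := hchain z₀ hz₀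
      rw [h, top_le_iff] at h2
      exact EReal.coe_ne_top _ h2
    have hcE_ne_bot : cE ≠ ⊥ := by
      intro h
      have h2 := hlow2
      rw [h, le_bot_iff] at h2
      exact EReal.coe_ne_bot _ h2
    set c : ℝ := cE.toReal with hcdef
    have hcE : cE = (c : EReal) := (EReal.coe_toReal hcE_ne_top hcE_ne_bot).symm
    have hchain' : ∀ z ∈ Ω, c ≤ u z - (inner ℝ p (z - xs) : ℝ) := by
      intro z hz
      have := hchain z hz
      rw [hcE] at this
      exact_mod_cast this
    have hlow' : ∀ q : Euc d, (inner ℝ q xs : ℝ) - conjF Ω u q ≤ c := by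
      intro q
      have := hlow q
      rw [hcE] at this
      exact_mod_cast this
    have hSG2 : SG Ω u p xs := by
      intro q
      have h1 : conjF Ω u p ≤ (inner ℝ p xs : ℝ) - c := by
        apply conjF_le hne
        intro z hz
        have h2 := hchain' z hz
        rw [inner_sub_right] at h2
        linarith
      have h2 := hlow' q
      have h3 : (inner ℝ xs (q - p) : ℝ) = (inner ℝ q xs : ℝ) - (inner ℝ p xs : ℝ) := by
        rw [inner_sub_right, real_inner_comm xs q, real_inner_comm xs p]
      linarith
    have hSG1 : SG Ω u p x₀ := SG_of_subdiff hne hR hlb hx₀Ω hpx₀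
    exact hxs_ne (SG.eq hdiff hSG2 hSG1)

end
end

section
/- Assume the mesh functions (u_h)_{h>0} converge uniformly on Ω̄ to a function u : Ω̄ → ℝ that is convex on Ω̄ and continuous on Ω̄. Let K be compact and U open with K ⊂ U ⊆ Ū ⊂ Ω. Then for every sequence h_k → 0, the set ∂u(K) \ (⋃_{n} ⋂_{k ≥ n} ∂Γ(u_{h_k})(U ∩ conv(N_{h_k}))) has d-dimensional Lebesgue measure zero, where ∂u(K) = ⋃_{x∈K} ∂u(x) (subdifferentials of u restricted to Ω). -/
open Set MeasureTheory Filter Topology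

noncomputable section

namespace S13

variable {d : ℕ}

/-- The convex conjugate of `u` over `closure Ω`. -/
def ffun (Ω : Set (Euc d)) (u : Euc d → ℝ) (p : Euc d) : ℝ :=
  sSup ((fun x => (inner ℝ p x : ℝ) - u x) '' closure Ω)

/-- Points where the conjugate has two distinct subgradients. -/
def badSet (Ω : Set (Euc d)) (u : Euc d → ℝ) : Set (Euc d) :=
  {p | ∃ x y : Euc d, x ≠ y ∧
    (∀ q, ffun Ω u p + (inner ℝ (q - p) x : ℝ) ≤ ffun Ω u q) ∧
    (∀ q, ffun Ω u p + (inner ℝ (q - p) y : ℝ) ≤ ffun Ω u q)}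

lemma subgrad_eq {f : Euc d → ℝ} {p x : Euc d} (hf : DifferentiableAt ℝ f p)
    (hx : ∀ q, f p + (inner ℝ (q - p) x : ℝ) ≤ f q) (v : Euc d) :
    (fderiv ℝ f p) v = (inner ℝ v x : ℝ) := by
  have line : HasDerivAt (fun t : ℝ => p + t • v) v 0 := by
    simpa using ((hasDerivAt_id (0:ℝ)).smul_const v).const_add p
  have hc : HasDerivAt (fun t : ℝ => f (p + t • v)) ((fderiv ℝ f p) v) 0 := by
    have h0 : (p + (0:ℝ) • v) = p := by simp
    have := (h0 ▸ hf.hasFDerivAt).comp_hasDerivAt 0 line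
    rw [h0] at this
    exact this
  have hg : HasDerivAt (fun t : ℝ => f (p + t • v) - t * (inner ℝ v x : ℝ))
      ((fderiv ℝ f p) v - (inner ℝ v x : ℝ)) 0 := hc.sub (hasDerivAt_mul_const _)
  have hmin : IsLocalMin (fun t : ℝ => f (p + t • v) - t * (inner ℝ v x : ℝ)) 0 := by
    apply Filter.Eventually.of_forall
    intro t
    have := hx (p + t • v)
    simp only [add_sub_cancel_left, real_inner_smul_left] at this
    simp only [zero_smul, add_zero, zero_mul, sub_zero]
    linarith
  have := hmin.hasDerivAt_eq_zero hg
  linarith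

lemma badSet_null (Ω : Set (Euc d)) (u : Euc d → ℝ) (hbd : Bornology.IsBounded Ω)
    (hne : Ω.Nonempty) (huc : ContinuousOn u (closure Ω)) :
    volume (badSet Ω u) = 0 := by
  obtain ⟨R, hR⟩ := hbd.closure.exists_norm_le
  set R' : ℝ := max R 0 with hR'def
  have hR' : ∀ x ∈ closure Ω, ‖x‖ ≤ R' := fun x hx => (hR x hx).trans (le_max_left _ _)
  have hK : IsCompact (closure Ω) :=
    Metric.isCompact_of_isClosed_isBounded isClosed_closure hbd.closure
  have hKne : (closure Ω).Nonempty := hne.closure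
  have hcont : ∀ p : Euc d, ContinuousOn (fun x => (inner ℝ p x : ℝ) - u x) (closure Ω) :=
    fun p => ((innerSL ℝ p).continuous.continuousOn).sub huc
  have himgne : ∀ p : Euc d, ((fun x => (inner ℝ p x : ℝ) - u x) '' closure Ω).Nonempty :=
    fun p => hKne.image _
  have hbdd : ∀ p : Euc d, BddAbove ((fun x => (inner ℝ p x : ℝ) - u x) '' closure Ω) :=
    fun p => (hK.image_of_continuousOn (hcont p)).bddAbove
  have key : ∀ p q : Euc d, ffun Ω u p ≤ ffun Ω u q + R' * ‖p - q‖ := by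
    intro p q
    apply csSup_le (himgne p)
    rintro t ⟨x, hx, rfl⟩
    show (inner ℝ p x : ℝ) - u x ≤ _
    have h1 : (inner ℝ q x : ℝ) - u x ≤ ffun Ω u q := le_csSup (hbdd q) ⟨x, hx, rfl⟩
    have h2 : (inner ℝ (p - q) x : ℝ) ≤ ‖p - q‖ * ‖x‖ := real_inner_le_norm _ _
    have h3 : ‖p - q‖ * ‖x‖ ≤ R' * ‖p - q‖ := by
      rw [mul_comm]
      exact mul_le_mul_of_nonneg_right (hR' x hx) (norm_nonneg _)
    have : (inner ℝ p x : ℝ) = (inner ℝ q x : ℝ) + (inner ℝ (p - q) x : ℝ) := by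
      rw [inner_sub_left]; ring
    linarith
  have hlip : LipschitzWith ⟨R', le_max_right _ _⟩ (ffun Ω u) := by
    apply LipschitzWith.of_dist_le_mul
    intro p q
    rw [Real.dist_eq, dist_eq_norm]
    change |ffun Ω u p - ffun Ω u q| ≤ R' * ‖p - q‖
    rw [abs_sub_le_iff]
    constructor
    · have := key p q; linarith
    · have := key q p; rw [norm_sub_rev]; linarith
  have hae := hlip.ae_differentiableAt (μ := volume)
  rw [ae_iff] at hae
  apply measure_mono_null (t := {p | ¬ DifferentiableAt ℝ (ffun Ω u) p}) _ hae
  rintro p ⟨x, y, hxy, hx, hy⟩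
  intro hdiff
  apply hxy
  apply ext_inner_right ℝ
  intro v
  have e1 := subgrad_eq hdiff hx v
  have e2 := subgrad_eq hdiff hy v
  have c1 : (inner ℝ x v : ℝ) = inner ℝ v x := real_inner_comm _ _
  have c2 : (inner ℝ y v : ℝ) = inner ℝ v y := real_inner_comm _ _
  linarith

lemma coord_le_norm (x : Euc d) (i : Fin d) : |x i| ≤ ‖x‖ := by
  rw [EuclideanSpace.norm_eq]
  have h1 : ‖x i‖ ^ 2 ≤ ∑ j, ‖x j‖ ^ 2 :=
    Finset.single_le_sum (fun j _ => sq_nonneg ‖x j‖) (Finset.mem_univ i)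
  calc |x i| = Real.sqrt (‖x i‖ ^ 2) := by
        rw [Real.sqrt_sq_eq_abs]; simp [Real.norm_eq_abs, abs_abs]
    _ ≤ _ := Real.sqrt_le_sqrt h1

lemma latt_finite (Ω : Set (Euc d)) (hbd : Bornology.IsBounded Ω) {h : ℝ} (hh : 0 < h) :
    (meshΩ Ω h).Finite := by
  obtain ⟨R, hR⟩ := hbd.exists_norm_le
  set g : Euc d → (Fin d → ℤ) := fun x i => round (x i / h) with hg
  have hrec : ∀ x ∈ meshΩ Ω h, ∀ i, (x : Euc d) i = (g x i : ℝ) * h := by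
    intro x hx i
    obtain ⟨m, hm⟩ := hx.2 i
    have : x i / h = (m : ℝ) := by rw [hm, mul_div_assoc, div_self hh.ne', mul_one]
    rw [hg]; simp only [this, round_intCast]; exact hm
  have hinj : InjOn g (meshΩ Ω h) := by
    intro x hx y hy hxy
    ext i
    rw [hrec x hx i, hrec y hy i, hxy]
  have himg : (g '' meshΩ Ω h).Finite := by
    apply Set.Finite.subset (Set.Finite.pi (t := fun _ : Fin d => Set.Icc (-⌈R/h⌉) ⌈R/h⌉)
      (fun _ => Set.finite_Icc _ _))
    rintro w ⟨x, hx, rfl⟩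
    intro i _
    have hxi : |x i| ≤ R := (coord_le_norm x i).trans (hR x hx.1)
    have hxg := hrec x hx i
    have habs : (|g x i| : ℝ) ≤ R / h := by
      rw [le_div_iff₀ hh]
      calc (|g x i| : ℝ) * h = |(g x i : ℝ) * h| := by
            rw [abs_mul, abs_of_pos hh]
      _ = |x i| := by rw [hxg]
      _ ≤ R := hxi
    have hceil : (|g x i| : ℝ) ≤ (⌈R/h⌉ : ℝ) := habs.trans (Int.le_ceil _)
    have : |g x i| ≤ ⌈R/h⌉ := by exact_mod_cast hceil
    rw [abs_le] at this
    exact ⟨this.1, this.2⟩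
  exact Set.Finite.of_finite_image himg hinj

lemma exists_latt_near (x₀ : Euc d) {h : ℝ} (hh : 0 < h) :
    ∃ y ∈ latt d h, dist y x₀ ≤ h * Real.sqrt d := by
  refine ⟨(EuclideanSpace.equiv (Fin d) ℝ).symm (fun i => ⌊x₀ i / h⌋ * h), ?_, ?_⟩
  · intro i; exact ⟨⌊x₀ i / h⌋, rfl⟩
  · rw [EuclideanSpace.dist_eq]
    have hcoord : ∀ i : Fin d,
        dist ((⌊x₀ i / h⌋ : ℝ) * h) (x₀ i) ^ 2 ≤ h ^ 2 := by
      intro i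
      have h1 : (⌊x₀ i / h⌋ : ℝ) ≤ x₀ i / h := Int.floor_le _
      have h2 : x₀ i / h ≤ (⌊x₀ i / h⌋ : ℝ) + 1 := le_of_lt (Int.lt_floor_add_one _)
      have h3 : (⌊x₀ i / h⌋ : ℝ) * h ≤ x₀ i := by
        have := mul_le_mul_of_nonneg_right h1 hh.le
        rwa [div_mul_cancel₀ _ hh.ne'] at this
      have h4 : x₀ i ≤ (⌊x₀ i / h⌋ : ℝ) * h + h := by
        have := mul_le_mul_of_nonneg_right h2 hh.le
        rw [div_mul_cancel₀ _ hh.ne'] at this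
        nlinarith
      have h5 : dist ((⌊x₀ i / h⌋ : ℝ) * h) (x₀ i) ≤ h := by
        rw [Real.dist_eq, abs_le]
        constructor <;> linarith
      exact pow_le_pow_left₀ dist_nonneg h5 2
    have hsum : ∑ i, dist (((EuclideanSpace.equiv (Fin d) ℝ).symm
        (fun i => (⌊x₀ i / h⌋ : ℝ) * h)) i) (x₀ i) ^ 2 ≤ (d : ℝ) * h ^ 2 := by
      have := Finset.sum_le_sum (fun (i : Fin d) (_ : i ∈ Finset.univ) => hcoord i)
      simpa [mul_comm] using this
    have hfin : Real.sqrt ((d : ℝ) * h ^ 2) = h * Real.sqrt d := by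
      rw [Real.sqrt_mul (Nat.cast_nonneg d), Real.sqrt_sq hh.le, mul_comm]
    exact le_trans (Real.sqrt_le_sqrt hsum) (le_of_eq hfin)

end S13

/-- if `u_h → u` uniformly on `closure Ω` with `u` convex on `closure Ω` and
continuous on `closure Ω`, and `K ⊂ U ⊆ closure U ⊂ Ω` with `K` compact, `U` open, then for
every sequence `h_k → 0` the set
`∂u(K) \ (⋃ n, ⋂ k ≥ n, ∂Γ(u_{h_k})(U ∩ conv N_{h_k}))` is Lebesgue-null. -/
theorem statement13 {d : ℕ} (hd : 1 ≤ d) (Ω : Set (Euc d))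
    (hne : Ω.Nonempty) (hbd : Bornology.IsBounded Ω) (hop : IsOpen Ω) (hcv : Convex ℝ Ω)
    (B : ℝ → Set (Euc d)) (hB : ∀ h : ℝ, 0 < h → (B h).Finite ∧ B h ⊆ frontier Ω)
    (u : Euc d → ℝ) (huc : ContinuousOn u (closure Ω)) (hucv : ConvexOn ℝ (closure Ω) u)
    (uh : ℝ → Euc d → ℝ)
    (hcvg : ∀ ε : ℝ, 0 < ε → ∃ h₀ : ℝ, 0 < h₀ ∧ ∀ h : ℝ, 0 < h → h < h₀ →
      ∀ x ∈ meshΩ Ω h ∪ B h, |uh h x - u x| < ε)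
    (K : Set (Euc d)) (hK : IsCompact K)
    (U : Set (Euc d)) (hU : IsOpen U) (hKU : K ⊆ U) (hUΩ : closure U ⊆ Ω) :
    ∀ hk : ℕ → ℝ, (∀ k, 0 < hk k) → Tendsto hk atTop (𝓝 0) →
    volume ((⋃ x ∈ K, subdiff Ω u x) \
      (⋃ n : ℕ, ⋂ k ∈ Ici n, ⋃ x ∈ U ∩ convexHull ℝ (meshΩ Ω (hk k) ∪ B (hk k)),
        subdiff (convexHull ℝ (meshΩ Ω (hk k) ∪ B (hk k)))
          (convEnv (meshΩ Ω (hk k) ∪ B (hk k)) (uh (hk k))) x)) = 0 := by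
  intro hk hkpos hktend
  apply measure_mono_null _ (S13.badSet_null Ω u hbd hne huc)
  intro p hp
  obtain ⟨hpD, hpG⟩ := hp
  simp only [mem_iUnion] at hpD
  obtain ⟨x₀, hx₀K, hx₀sub⟩ := hpD
  by_contra hpN
  apply hpG
  have hx₀U : x₀ ∈ U := hKU hx₀K
  have hx₀Ω : x₀ ∈ Ω := hUΩ (subset_closure hx₀U)
  have hclK : IsCompact (closure Ω) :=
    Metric.isCompact_of_isClosed_isBounded isClosed_closure hbd.closure
  set ψ : Euc d → ℝ := fun z => u z - u x₀ - (inner ℝ p (z - x₀) : ℝ) with hψdef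
  have hψcont : ContinuousOn ψ (closure Ω) := by
    apply (huc.sub continuousOn_const).sub
    exact Continuous.continuousOn
      ((innerSL ℝ p).continuous.comp (continuous_id.sub continuous_const))
  have hψ0 : ψ x₀ = 0 := by simp [hψdef]
  have hexp : ∀ z : Euc d, (inner ℝ p (z - x₀) : ℝ) = (inner ℝ p z : ℝ) - inner ℝ p x₀ :=
    fun z => inner_sub_right _ _ _
  have hψΩ : ∀ z ∈ Ω, 0 ≤ ψ z := by
    intro z hz
    have := hx₀sub z hz
    simp only [hψdef]
    linarith
  have hψcl : ∀ z ∈ closure Ω, 0 ≤ ψ z := by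
    intro z hz
    haveI : (nhdsWithin z Ω).NeBot := mem_closure_iff_nhdsWithin_neBot.mp hz
    have htd : Tendsto ψ (nhdsWithin z Ω) (nhds (ψ z)) :=
      (hψcont z hz).mono subset_closure
    exact ge_of_tendsto htd (eventually_nhdsWithin_of_forall hψΩ)
  have hbddf : ∀ q : Euc d, BddAbove ((fun x => (inner ℝ q x : ℝ) - u x) '' closure Ω) :=
    fun q => (hclK.image_of_continuousOn
      (((innerSL ℝ q).continuous.continuousOn).sub huc)).bddAbove
  have hffun : S13.ffun Ω u p = (inner ℝ p x₀ : ℝ) - u x₀ := by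
    apply IsGreatest.csSup_eq
    constructor
    · exact ⟨x₀, subset_closure hx₀Ω, rfl⟩
    · rintro t ⟨z, hz, rfl⟩
      have := hψcl z hz
      simp only [hψdef, hexp z] at this
      show (inner ℝ p z : ℝ) - u z ≤ _
      linarith
  have hcontact : ∀ z ∈ closure Ω, ψ z = 0 →
      ∀ q, S13.ffun Ω u p + (inner ℝ (q - p) z : ℝ) ≤ S13.ffun Ω u q := by
    intro z hz hz0 q
    have hval : S13.ffun Ω u p + (inner ℝ (q - p) z : ℝ) = (inner ℝ q z : ℝ) - u z := by
      have h1 : (inner ℝ (q - p) z : ℝ) = (inner ℝ q z : ℝ) - inner ℝ p z := by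
        rw [inner_sub_left]
      simp only [hψdef, hexp z] at hz0
      rw [hffun, h1]
      linarith
    rw [hval]
    exact le_csSup (hbddf q) ⟨z, hz, rfl⟩
  have hpos : ∀ z ∈ closure Ω, z ≠ x₀ → 0 < ψ z := by
    intro z hz hzx
    rcases (hψcl z hz).lt_or_eq with hlt | heq
    · exact hlt
    · exact absurd ⟨x₀, z, fun e => hzx e.symm,
        hcontact x₀ (subset_closure hx₀Ω) hψ0,
        hcontact z hz heq.symm⟩ hpN
  have hfrN : (frontier Ω).Nonempty := by
    by_contra hemp
    rw [not_nonempty_iff_eq_empty] at hemp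
    have hcl : IsClosed Ω := by
      rw [← closure_subset_iff_isClosed]
      intro z hz
      by_contra hzΩ
      have : z ∈ frontier Ω := ⟨hz, by rwa [hop.interior_eq]⟩
      simp [hemp] at this
    haveI : Nonempty (Fin d) := ⟨⟨0, hd⟩⟩
    rcases isClopen_iff.mp ⟨hcl, hop⟩ with hE | hE
    · exact hne.ne_empty hE
    · exact NormedSpace.unbounded_univ ℝ (Euc d) (hE ▸ hbd)
  have hfrU : ∀ z ∈ frontier Ω, z ∉ U := by
    intro z hz hzU
    have hzΩ : z ∈ Ω := hUΩ (subset_closure hzU)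
    exact hz.2 (by rwa [hop.interior_eq])
  have hSne : (closure Ω \ U).Nonempty := by
    obtain ⟨z, hz⟩ := hfrN
    exact ⟨z, hz.1, hfrU z hz⟩
  have hSc : IsCompact (closure Ω \ U) := hclK.diff hU
  obtain ⟨zS, hzS, hzmin⟩ := hSc.exists_isMinOn hSne (hψcont.mono diff_subset)
  obtain ⟨δ, hδpos, hδS⟩ : ∃ δ : ℝ, 0 < δ ∧ ∀ z ∈ closure Ω, z ∉ U → δ ≤ ψ z :=
    ⟨ψ zS, hpos zS hzS.1 (fun e => hzS.2 (e ▸ hx₀U)),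
      fun z hz hzU => (isMinOn_iff.mp hzmin) z ⟨hz, hzU⟩⟩
  have hψct : ContinuousAt ψ x₀ :=
    hψcont.continuousAt (Filter.mem_of_superset (hop.mem_nhds hx₀Ω) subset_closure)
  obtain ⟨ρ₁, hρ₁pos, hρ₁⟩ := Metric.continuousAt_iff.mp hψct (δ/4) (div_pos hδpos (by norm_num))
  obtain ⟨ρ₂, hρ₂pos, hρ₂⟩ := Metric.isOpen_iff.mp (hop.inter hU) x₀ ⟨hx₀Ω, hx₀U⟩
  set ρ := min ρ₁ ρ₂ with hρdef
  have hρpos : 0 < ρ := lt_min hρ₁pos hρ₂pos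
  obtain ⟨h₀, hh₀pos, hh₀⟩ := hcvg (δ/8) (div_pos hδpos (by norm_num))
  have hsd : (0:ℝ) ≤ Real.sqrt d := Real.sqrt_nonneg _
  set h₁ := ρ / (Real.sqrt d + 1) with hh₁def
  have hh₁pos : 0 < h₁ := div_pos hρpos (by linarith)
  have hevn : ∀ᶠ k in atTop, hk k < min h₀ h₁ :=
    hktend.eventually (gt_mem_nhds (lt_min hh₀pos hh₁pos))
  obtain ⟨n, hn⟩ := eventually_atTop.mp hevn
  refine mem_iUnion.mpr ⟨n, mem_iInter₂.mpr fun k hkge => ?_⟩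
  have hh : 0 < hk k := hkpos k
  have hhh₀ : hk k < h₀ := lt_of_lt_of_le (hn k hkge) (min_le_left _ _)
  have hhh₁ : hk k < h₁ := lt_of_lt_of_le (hn k hkge) (min_le_right _ _)
  set h : ℝ := hk k with hhdef
  set Nh := meshΩ Ω h ∪ B h with hNhdef
  have hNfin : Nh.Finite := (S13.latt_finite Ω hbd hh).union (hB h hh).1
  have herr : ∀ y ∈ Nh, |uh h y - u y| < δ/8 := fun y hy => hh₀ h hh hhh₀ y hy
  have hNcl : Nh ⊆ closure Ω := by
    rintro y (hy | hy)
    · exact subset_closure hy.1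
    · exact frontier_subset_closure ((hB h hh).2 hy)
  obtain ⟨y₀, hy₀latt, hy₀dist⟩ := S13.exists_latt_near x₀ hh
  have hy₀ρ : dist y₀ x₀ < ρ := by
    have hlt : h * (Real.sqrt d + 1) < ρ := by
      rw [hh₁def] at hhh₁
      exact (lt_div_iff₀ (by linarith)).mp hhh₁
    nlinarith [hy₀dist]
  have hy₀ΩU : y₀ ∈ Ω ∩ U :=
    hρ₂ (Metric.mem_ball.mpr (lt_of_lt_of_le hy₀ρ (min_le_right _ _)))
  have hy₀ψ : ψ y₀ < δ/4 := by
    have := hρ₁ (lt_of_lt_of_le hy₀ρ (min_le_left _ _))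
    rw [Real.dist_eq, hψ0, sub_zero] at this
    exact (abs_lt.mp this).2
  have hy₀N : y₀ ∈ Nh := Or.inl ⟨hy₀ΩU.1, hy₀latt⟩
  obtain ⟨ys, hysN, hysmin⟩ := Set.exists_min_image Nh
    (fun y => uh h y - (inner ℝ p y : ℝ)) hNfin ⟨y₀, hy₀N⟩
  have hkey : ∀ y : Euc d, u y - (inner ℝ p y : ℝ) = ψ y + (u x₀ - (inner ℝ p x₀ : ℝ)) := by
    intro y; simp only [hψdef, hexp y]; ring
  clear_value ψ
  have hysU : ys ∈ U := by
    by_contra hysUn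
    have h1 : δ ≤ ψ ys := hδS ys (hNcl hysN) hysUn
    have h2 := hysmin y₀ hy₀N
    have e1 := herr ys hysN
    have e2 := herr y₀ hy₀N
    rw [abs_lt] at e1 e2
    have k1 := hkey ys
    have k2 := hkey y₀
    linarith
  obtain ⟨ymax, hymaxN, hymax⟩ := Set.exists_max_image Nh (uh h) hNfin ⟨y₀, hy₀N⟩
  obtain ⟨ymin, hyminN, hymin⟩ := Set.exists_min_image Nh (uh h) hNfin ⟨y₀, hy₀N⟩
  refine mem_iUnion₂.mpr ⟨ys, ⟨hysU, subset_convexHull ℝ Nh hysN⟩, ?_⟩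
  simp only [subdiff, mem_setOf_eq]
  intro z hz
  have hbddz : ∀ w ∈ convexHull ℝ Nh, BddAbove {t | ∃ (q : Euc d) (c : ℝ),
      (∀ y ∈ Nh, (inner ℝ q y : ℝ) + c ≤ uh h y) ∧ t = (inner ℝ q w : ℝ) + c} := by
    intro w hw
    refine ⟨uh h ymax, ?_⟩
    rintro t ⟨q, c, hqc, rfl⟩
    have hsub : convexHull ℝ Nh ⊆ {v : Euc d | (inner ℝ q v : ℝ) + c ≤ uh h ymax} := by
      apply convexHull_min
      · intro y hy
        exact le_trans (hqc y hy) (hymax y hy)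
      · intro a ha b hb s t hs ht hst
        simp only [mem_setOf_eq] at ha hb ⊢
        rw [inner_add_right, real_inner_smul_right, real_inner_smul_right]
        have ha' := mul_le_mul_of_nonneg_left ha hs
        have hb' := mul_le_mul_of_nonneg_left hb ht
        have hc : s * c + t * c = c := by rw [← add_mul, hst, one_mul]
        have hm : s * uh h ymax + t * uh h ymax = uh h ymax := by
          rw [← add_mul, hst, one_mul]
        nlinarith [ha', hb', hc, hm]
    exact hsub hw
  have hΓle : convEnv Nh (uh h) ys ≤ uh h ys := by
    rw [convEnv]
    apply csSup_le
    · exact ⟨(inner ℝ (0:Euc d) ys : ℝ) + uh h ymin, 0, uh h ymin,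
        fun y hy => by simpa using hymin y hy, rfl⟩
    · rintro t ⟨q, c, hqc, rfl⟩
      exact hqc ys hysN
  have hA : ∀ y ∈ Nh, (inner ℝ p y : ℝ) + (uh h ys - (inner ℝ p ys : ℝ)) ≤ uh h y := by
    intro y hy
    have := hysmin y hy
    linarith
  have hΓge : (inner ℝ p z : ℝ) + (uh h ys - (inner ℝ p ys : ℝ)) ≤ convEnv Nh (uh h) z := by
    rw [convEnv]
    exact le_csSup (hbddz z hz) ⟨p, uh h ys - (inner ℝ p ys : ℝ), hA, rfl⟩
  have hinner : (inner ℝ p (z - ys) : ℝ) = (inner ℝ p z : ℝ) - inner ℝ p ys :=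
    inner_sub_right _ _ _
  rw [hinner]
  linarith


end
end

section
/- Let (u_h)_{h>0} be mesh functions with |u_h(x)| ≤ M for all x ∈ N_h and all h, with M independent of h. Then there exist a sequence h_k → 0 and a convex function v : Ω → ℝ such that Γ(u_{h_k}) converges to v uniformly on compact subsets of Ω: for every compact K ⊂ Ω, sup_{x∈K} |Γ(u_{h_k})(x) − v(x)| → 0 as k → ∞ (K ⊆ conv(N_{h_k}) for k large). -/
open Set MeasureTheory Filter Topology

noncomputable section

lemma corner_hull {d : ℕ} {h : ℝ} (hh : 0 < h) (x : Euc d) {S : Set (Euc d)}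
    (hS : ∀ y : Euc d, y ∈ latt d h → (∀ i, |y i - x i| ≤ h) → y ∈ S) :
    x ∈ convexHull ℝ S := by
  classical
  set m : Fin d → ℤ := fun i => ⌊x i / h⌋ with hm
  set t : Fin d → ℝ := fun i => Int.fract (x i / h) with ht
  have ht0 : ∀ i, 0 ≤ t i := fun i => Int.fract_nonneg _
  have ht1 : ∀ i, t i ≤ 1 := fun i => (Int.fract_lt_one _).le
  have hx : ∀ i, x i = ((m i : ℝ) + t i) * h := by
    intro i
    have : (m i : ℝ) + t i = x i / h := Int.floor_add_fract _
    rw [this, div_mul_cancel₀ _ hh.ne']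
  set c : (Fin d → Bool) → Euc d :=
    fun ε => (EuclideanSpace.equiv (Fin d) ℝ).symm
      (fun i => ((m i : ℝ) + (if ε i then 1 else 0)) * h) with hc
  have hcapp : ∀ ε i, c ε i = ((m i : ℝ) + (if ε i then 1 else 0)) * h := by
    intro ε i; simp [hc]
  set w : (Fin d → Bool) → ℝ := fun ε => ∏ i, (if ε i then t i else 1 - t i) with hw
  have hw0 : ∀ ε, 0 ≤ w ε := by
    intro ε
    apply Finset.prod_nonneg
    intro i _
    by_cases hb : ε i <;> simp [hb, ht0 i, ht1 i, sub_nonneg]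
  have hsum : ∑ ε : Fin d → Bool, w ε = 1 := by
    have := Finset.prod_univ_sum (fun _ : Fin d => (Finset.univ : Finset Bool))
      (fun i b => if b then t i else 1 - t i)
    simp only [Fintype.piFinset_univ] at this
    rw [hw]
    simp only [← this]
    rw [Finset.prod_eq_one]
    intro i _
    simp [Fintype.sum_bool]
  have hkey : ∀ j, ∑ ε : Fin d → Bool, w ε * (if ε j then (1:ℝ) else 0) = t j := by
    intro j
    have h1 : ∀ ε : Fin d → Bool, w ε * (if ε j then (1:ℝ) else 0)
        = ∏ i, ((if ε i then t i else 1 - t i) * (if i = j then (if ε i then (1:ℝ) else 0) else 1)) := by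
      intro ε
      rw [Finset.prod_mul_distrib, Finset.prod_ite_eq' Finset.univ j (fun i => if ε i then (1:ℝ) else 0)]
      simp [hw]
    simp only [h1]
    have := Finset.prod_univ_sum (fun _ : Fin d => (Finset.univ : Finset Bool))
      (fun i b => (if b then t i else 1 - t i) * (if i = j then (if b then (1:ℝ) else 0) else 1))
    simp only [Fintype.piFinset_univ] at this
    rw [← this]
    rw [Finset.prod_eq_single j]
    · simp [Fintype.sum_bool]
    · intro i _ hij
      simp [Fintype.sum_bool, hij]
    · simp
  have hcomb : (Finset.univ : Finset (Fin d → Bool)).centerMass w c = x := by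
    rw [Finset.centerMass]
    rw [hsum]
    simp only [inv_one, one_smul]
    apply (WithLp.linearEquiv 2 ℝ (Fin d → ℝ)).injective
    rw [map_sum]
    funext j
    rw [Finset.sum_apply]
    have happ : ∀ ε : Fin d → Bool,
        ((WithLp.linearEquiv 2 ℝ (Fin d → ℝ)) (w ε • c ε)) j = w ε * c ε j := fun ε => rfl
    simp only [happ]
    have : ∀ ε : Fin d → Bool, w ε * c ε j
        = (w ε * ((m j : ℝ) * h)) + (w ε * (if ε j then (1:ℝ) else 0)) * h := by
      intro ε
      rw [hcapp]
      by_cases hb : ε j <;> simp [hb] <;> ring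
    simp only [this]
    rw [Finset.sum_add_distrib, ← Finset.sum_mul, ← Finset.sum_mul, hsum, hkey]
    have hxj : (WithLp.linearEquiv 2 ℝ (Fin d → ℝ)) x j = x j := rfl
    rw [hxj, hx j]
    ring
  rw [← hcomb]
  apply Finset.centerMass_mem_convexHull
  · intro ε _; exact hw0 ε
  · rw [hsum]; norm_num
  · intro ε _
    apply hS
    · intro i
      refine ⟨m i + (if ε i then 1 else 0), ?_⟩
      rw [hcapp]
      push_cast
      ring_nf
    · intro i
      rw [hcapp, hx i]
      have : ((m i : ℝ) + (if ε i then 1 else 0)) * h - ((m i : ℝ) + t i) * h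
          = ((if ε i then (1:ℝ) else 0) - t i) * h := by ring
      rw [this, abs_mul, abs_of_pos hh]
      have : |(if ε i then (1:ℝ) else 0) - t i| ≤ 1 := by
        rw [abs_le]
        constructor
        · by_cases hb : ε i <;> simp [hb] <;> linarith [ht1 i, ht0 i]
        · by_cases hb : ε i <;> simp [hb] <;> linarith [ht1 i, ht0 i]
      nlinarith [hh.le]

lemma latticeFill {d : ℕ} (hd : 1 ≤ d) {Ω K : Set (Euc d)} (hop : IsOpen Ω) (hK : IsCompact K)
    (hKΩ : K ⊆ Ω) :
    ∃ h₀ : ℝ, 0 < h₀ ∧ ∀ h : ℝ, 0 < h → h ≤ h₀ → K ⊆ convexHull ℝ (Ω ∩ latt d h) := by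
  obtain ⟨δ, hδ, hth⟩ := hK.exists_thickening_subset_open hop hKΩ
  refine ⟨δ / (d + 1), by positivity, ?_⟩
  intro h hh hhle x hx
  apply corner_hull hh x
  intro y hy hyd
  have hdist : dist y x < δ := by
    have h1 : dist y x ≤ Real.sqrt (d * h ^ 2) := by
      rw [EuclideanSpace.dist_eq]
      apply Real.sqrt_le_sqrt
      calc ∑ i, dist (y i) (x i) ^ 2 ≤ ∑ _i : Fin d, h ^ 2 := by
            apply Finset.sum_le_sum
            intro i _
            rw [Real.dist_eq]
            have := hyd i
            nlinarith [abs_nonneg (y i - x i)]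
        _ = d * h ^ 2 := by
            rw [Finset.sum_const, Finset.card_univ, Fintype.card_fin, nsmul_eq_mul]
    have hsd : Real.sqrt d ≤ d := by
      have h1d : (1:ℝ) ≤ d := by exact_mod_cast hd
      nlinarith [Real.sq_sqrt (by positivity : (0:ℝ) ≤ (d:ℝ)), Real.sqrt_nonneg (d:ℝ),
        sq_nonneg (Real.sqrt d - 1)]
    have h2 : Real.sqrt (d * h ^ 2) = Real.sqrt d * h := by
      rw [Real.sqrt_mul (by positivity), Real.sqrt_sq hh.le]
    have h3 : (d:ℝ) * h ≤ d * (δ / (d + 1)) :=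
      mul_le_mul_of_nonneg_left hhle (by positivity)
    have h4 : (d:ℝ) * (δ / (d + 1)) < δ := by
      rw [mul_div_assoc']
      rw [div_lt_iff₀ (by positivity)]
      nlinarith
    have h5 : Real.sqrt d * h ≤ d * h := mul_le_mul_of_nonneg_right hsd hh.le
    calc dist y x ≤ Real.sqrt (d * h ^ 2) := h1
      _ = Real.sqrt d * h := h2
      _ ≤ d * h := h5
      _ ≤ d * (δ / (d + 1)) := h3
      _ < δ := h4
  exact ⟨hth (Metric.mem_thickening_iff.mpr ⟨x, hx, hdist⟩), hy⟩

def envSet {d : ℕ} (N : Set (Euc d)) (u : Euc d → ℝ) (x : Euc d) : Set ℝ :=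
  {t | ∃ (p : Euc d) (c : ℝ),
    (∀ y ∈ N, (inner ℝ p y : ℝ) + c ≤ u y) ∧ t = (inner ℝ p x : ℝ) + c}

lemma convEnv_eq {d : ℕ} (N : Set (Euc d)) (u : Euc d → ℝ) (x : Euc d) :
    convEnv N u x = sSup (envSet N u x) := rfl

lemma neg_M_mem {d : ℕ} {N : Set (Euc d)} {u : Euc d → ℝ} {M : ℝ}
    (hu : ∀ y ∈ N, -M ≤ u y) (x : Euc d) : -M ∈ envSet N u x :=
  ⟨0, -M, fun y hy => by simpa using hu y hy, by simp⟩

lemma envSet_le {d : ℕ} {N : Set (Euc d)} {u : Euc d → ℝ} {M : ℝ}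
    (hu : ∀ y ∈ N, u y ≤ M) {x : Euc d} (hx : x ∈ convexHull ℝ N) :
    ∀ t ∈ envSet N u x, t ≤ M := by
  rintro t ⟨p, c, hpc, rfl⟩
  have hconv : Convex ℝ {z : Euc d | (inner ℝ p z : ℝ) + c ≤ M} := by
    intro z1 h1 z2 h2 a b ha hb hab
    simp only [mem_setOf_eq] at h1 h2 ⊢
    rw [inner_add_right, real_inner_smul_right, real_inner_smul_right]
    have hc : a * c + b * c = c := by rw [← add_mul, hab, one_mul]
    have hMM : a * M + b * M = M := by rw [← add_mul, hab, one_mul]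
    linarith [mul_le_mul_of_nonneg_left h1 ha, mul_le_mul_of_nonneg_left h2 hb]
  have hsub : convexHull ℝ N ⊆ {z : Euc d | (inner ℝ p z : ℝ) + c ≤ M} :=
    convexHull_min (fun y hy => (hpc y hy).trans (hu y hy)) hconv
  exact hsub hx

lemma envSet_bddAbove {d : ℕ} {N : Set (Euc d)} {u : Euc d → ℝ} {M : ℝ}
    (hu : ∀ y ∈ N, u y ≤ M) {x : Euc d} (hx : x ∈ convexHull ℝ N) :
    BddAbove (envSet N u x) := ⟨M, fun t ht => envSet_le hu hx t ht⟩

lemma convEnv_le {d : ℕ} {N : Set (Euc d)} {u : Euc d → ℝ} {M : ℝ} (hM0 : 0 ≤ M)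
    (hu : ∀ y ∈ N, u y ≤ M) {x : Euc d} (hx : x ∈ convexHull ℝ N) :
    convEnv N u x ≤ M :=
  Real.sSup_le (envSet_le hu hx) hM0

lemma neg_le_convEnv {d : ℕ} {N : Set (Euc d)} {u : Euc d → ℝ} {M : ℝ} (hM0 : 0 ≤ M)
    (hu : ∀ y ∈ N, -M ≤ u y) (x : Euc d) : -M ≤ convEnv N u x := by
  by_cases hb : BddAbove (envSet N u x)
  · exact le_csSup hb (neg_M_mem hu x)
  · rw [convEnv_eq, Real.sSup_of_not_bddAbove hb]; linarith

lemma abs_convEnv_le {d : ℕ} {N : Set (Euc d)} {u : Euc d → ℝ} {M : ℝ} (hM0 : 0 ≤ M)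
    (hu : ∀ y ∈ N, |u y| ≤ M) {x : Euc d} (hx : x ∈ convexHull ℝ N) :
    |convEnv N u x| ≤ M := by
  rw [abs_le]
  exact ⟨neg_le_convEnv hM0 (fun y hy => neg_le_of_abs_le (hu y hy)) x,
    convEnv_le hM0 (fun y hy => le_of_abs_le (hu y hy)) hx⟩

lemma convEnv_convexOn {d : ℕ} {N : Set (Euc d)} {u : Euc d → ℝ} {M : ℝ}
    (hu : ∀ y ∈ N, |u y| ≤ M) :
    ConvexOn ℝ (convexHull ℝ N) (convEnv N u) := by
  have huM : ∀ y ∈ N, u y ≤ M := fun y hy => le_of_abs_le (hu y hy)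
  have hum : ∀ y ∈ N, -M ≤ u y := fun y hy => neg_le_of_abs_le (hu y hy)
  refine ⟨convex_convexHull ℝ N, ?_⟩
  intro x hx y hy a b ha hb hab
  have hz : a • x + b • y ∈ convexHull ℝ N := (convex_convexHull ℝ N) hx hy ha hb hab
  rw [convEnv_eq]
  apply csSup_le ⟨-M, neg_M_mem hum _⟩
  rintro t ⟨p, c, hpc, rfl⟩
  have h1 : (inner ℝ p x : ℝ) + c ≤ convEnv N u x :=
    le_csSup (envSet_bddAbove huM hx) ⟨p, c, hpc, rfl⟩
  have h2 : (inner ℝ p y : ℝ) + c ≤ convEnv N u y :=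
    le_csSup (envSet_bddAbove huM hy) ⟨p, c, hpc, rfl⟩
  have hexp : (inner ℝ p (a • x + b • y) : ℝ) + c
      = a * ((inner ℝ p x : ℝ) + c) + b * ((inner ℝ p y : ℝ) + c) := by
    rw [inner_add_right, real_inner_smul_right, real_inner_smul_right]
    linear_combination (-c) * hab
  rw [hexp]
  simp only [smul_eq_mul]
  linarith [mul_le_mul_of_nonneg_left h1 ha, mul_le_mul_of_nonneg_left h2 hb]

lemma convex_pair_lip {d : ℕ} {S : Set (Euc d)} {f : Euc d → ℝ} {M δ : ℝ} (hδ : 0 < δ)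
    (hM : 0 ≤ M) (hf : ConvexOn ℝ S f) (hb : ∀ z ∈ S, |f z| ≤ M) {K : Set (Euc d)}
    (hKS : K ⊆ S) (hball : ∀ x ∈ K, Metric.ball x δ ⊆ S) :
    ∀ x ∈ K, ∀ y ∈ K, |f x - f y| ≤ (4 * M / δ) * dist x y := by
  intro x hx y hy
  by_cases hcl : dist y x < δ / 2
  · have hlip := (hf.subset (hball x hx) (convex_ball x δ)).lipschitzOnWith_of_abs_le
      (half_pos hδ) (fun a ha => hb a (hball x hx (Metric.mem_ball.mpr ha)))
    have hxm : x ∈ Metric.ball x (δ - δ / 2) := by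
      simp [Metric.mem_ball]; linarith
    have hym : y ∈ Metric.ball x (δ - δ / 2) := by
      simp only [Metric.mem_ball]; linarith
    have := hlip.dist_le_mul y hym x hxm
    rw [Real.dist_eq] at this
    have hcoe : ((2 * M / (δ / 2)).toNNReal : ℝ) = 4 * M / δ := by
      rw [Real.coe_toNNReal _ (by positivity)]
      field_simp
      ring
    rw [hcoe] at this
    rw [abs_sub_comm, dist_comm] at this
    exact this
  · push_neg at hcl
    have h2M : |f x - f y| ≤ 2 * M := by
      have h1 := hb x (hKS hx)
      have h2 := hb y (hKS hy)
      rw [abs_le] at h1 h2 ⊢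
      constructor <;> linarith
    have : 2 * M = (4 * M / δ) * (δ / 2) := by field_simp; ring
    rw [dist_comm] at hcl
    calc |f x - f y| ≤ 2 * M := h2M
      _ = (4 * M / δ) * (δ / 2) := this
      _ ≤ (4 * M / δ) * dist x y := by
          apply mul_le_mul_of_nonneg_left hcl (by positivity)


/-- if `|u_h| ≤ M` on the nodes uniformly in `h`, there is a sequence
`h_k → 0` and a convex `v : Ω → ℝ` with `Γ(u_{h_k}) → v` uniformly on compact subsets of `Ω`
(with `K ⊆ conv N_{h_k}` for `k` large). -/
theorem statement15 {d : ℕ} (hd : 1 ≤ d) (Ω : Set (Euc d))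
    (hne : Ω.Nonempty) (hbd : Bornology.IsBounded Ω) (hop : IsOpen Ω) (hcv : Convex ℝ Ω)
    (B : ℝ → Set (Euc d)) (hB : ∀ h : ℝ, 0 < h → (B h).Finite ∧ B h ⊆ frontier Ω)
    (uh : ℝ → Euc d → ℝ)
    (M : ℝ) (hM : ∀ h : ℝ, 0 < h → ∀ x ∈ meshΩ Ω h ∪ B h, |uh h x| ≤ M) :
    ∃ hk : ℕ → ℝ, (∀ k, 0 < hk k) ∧ Tendsto hk atTop (𝓝 0) ∧
    ∃ v : Euc d → ℝ, ConvexOn ℝ Ω v ∧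
      ∀ K : Set (Euc d), IsCompact K → K ⊆ Ω →
        (∃ k₀ : ℕ, ∀ k ≥ k₀, K ⊆ convexHull ℝ (meshΩ Ω (hk k) ∪ B (hk k))) ∧
        (∀ ε : ℝ, 0 < ε → ∃ k₁ : ℕ, ∀ k ≥ k₁, ∀ x ∈ K,
          |convEnv (meshΩ Ω (hk k) ∪ B (hk k)) (uh (hk k)) x - v x| < ε) := by
  classical
  set N : ℝ → Set (Euc d) := fun h => meshΩ Ω h ∪ B h with hNdef
  -- step 0 : M ≥ 0
  obtain ⟨x₀, hx₀⟩ := hne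
  have hM0 : 0 ≤ M := by
    obtain ⟨h₀', hh₀', hfill₀⟩ := latticeFill hd hop isCompact_singleton
      (singleton_subset_iff.mpr hx₀)
    have h1 : x₀ ∈ convexHull ℝ (Ω ∩ latt d h₀') :=
      hfill₀ h₀' hh₀' le_rfl (mem_singleton x₀)
    have h2 : (Ω ∩ latt d h₀').Nonempty := by
      by_contra hcon
      rw [not_nonempty_iff_eq_empty] at hcon
      rw [hcon, convexHull_empty] at h1
      exact h1
    obtain ⟨y, hy⟩ := h2
    exact (abs_nonneg _).trans (hM h₀' hh₀' y (Or.inl hy))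
  -- the basic h-sequence and envelopes
  set hseq : ℕ → ℝ := fun k => 1 / (k + 1) with hhseq
  have hhseqpos : ∀ k, 0 < hseq k := fun k => by positivity
  have hseqmono : ∀ {a b : ℕ}, a ≤ b → hseq b ≤ hseq a := by
    intro a b hab
    apply one_div_le_one_div_of_le (by positivity)
    have : (a : ℝ) ≤ b := by exact_mod_cast hab
    linarith
  set f : ℕ → Euc d → ℝ := fun k => convEnv (N (hseq k)) (uh (hseq k)) with hfdef
  have hbound : ∀ k, ∀ y ∈ N (hseq k), |uh (hseq k) y| ≤ M := fun k => hM _ (hhseqpos k)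
  have hconvf : ∀ k, ConvexOn ℝ (convexHull ℝ (N (hseq k))) (f k) :=
    fun k => convEnv_convexOn (hbound k)
  have habsf : ∀ k, ∀ x ∈ convexHull ℝ (N (hseq k)), |f k x| ≤ M :=
    fun k x hx => abs_convEnv_le hM0 (hbound k) hx
  -- filling of compacts
  have hfillN : ∀ K : Set (Euc d), IsCompact K → K ⊆ Ω →
      ∃ k₀ : ℕ, ∀ h : ℝ, 0 < h → h ≤ hseq k₀ → K ⊆ convexHull ℝ (N h) := by
    intro K hK hKΩ
    obtain ⟨h₀, h₀pos, hfill⟩ := latticeFill hd hop hK hKΩ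
    obtain ⟨n, hn⟩ := exists_nat_one_div_lt h₀pos
    refine ⟨n, fun h hh hhle => (hfill h hh (hhle.trans hn.le)).trans (convexHull_mono ?_)⟩
    intro z hz
    exact Or.inl hz
  -- equi-Lipschitz on compacts, eventually
  have hlip : ∀ K : Set (Euc d), IsCompact K → K ⊆ Ω →
      ∃ C : ℝ, 0 ≤ C ∧ ∃ k₀ : ℕ, ∀ k ≥ k₀,
        (∀ x ∈ K, |f k x| ≤ M) ∧
        (∀ x ∈ K, ∀ y ∈ K, |f k x - f k y| ≤ C * dist x y) := by
    intro K hK hKΩ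
    obtain ⟨δ₀, hδ₀, hth⟩ := hK.exists_thickening_subset_open hop hKΩ
    set δ : ℝ := δ₀ / 2 with hδdef
    have hδ : 0 < δ := by positivity
    have hK' : IsCompact (Metric.cthickening δ K) := hK.cthickening
    have hK'Ω : Metric.cthickening δ K ⊆ Ω :=
      (Metric.cthickening_subset_thickening' hδ₀ (by linarith) K).trans hth
    obtain ⟨k₀, hk₀⟩ := hfillN (Metric.cthickening δ K) hK' hK'Ω
    refine ⟨4 * M / δ, by positivity, k₀, ?_⟩
    intro k hk
    have hsub : Metric.cthickening δ K ⊆ convexHull ℝ (N (hseq k)) :=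
      hk₀ _ (hhseqpos k) (hseqmono hk)
    have hKsub : K ⊆ convexHull ℝ (N (hseq k)) :=
      (Metric.self_subset_cthickening K).trans hsub
    have hball : ∀ x ∈ K, Metric.ball x δ ⊆ convexHull ℝ (N (hseq k)) := by
      intro x hx z hz
      exact hsub (Metric.mem_cthickening_of_dist_le z x δ K hx (Metric.mem_ball.mp hz).le)
    exact ⟨fun x hx => habsf k x (hKsub hx),
      convex_pair_lip hδ hM0 (hconvf k) (habsf k) hKsub hball⟩
  -- a countable dense subset of Ω
  haveI : Nonempty ↥Ω := ⟨⟨x₀, hx₀⟩⟩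
  obtain ⟨s, hsc, hsd⟩ := TopologicalSpace.exists_countable_dense ↥Ω
  set D : Set (Euc d) := ((↑) : ↥Ω → Euc d) '' s with hDdef
  have hDsub : D ⊆ Ω := by rintro _ ⟨z, _, rfl⟩; exact z.2
  have hDc : D.Countable := hsc.image _
  have hDne : D.Nonempty := (hsd.nonempty).image _
  obtain ⟨xs, hxs⟩ := hDc.exists_eq_range hDne
  have hxsΩ : ∀ n, xs n ∈ Ω := fun n => hDsub (hxs ▸ mem_range_self n)
  have hDdense : ∀ x ∈ Ω, ∀ r : ℝ, 0 < r → ∃ n, dist (xs n) x < r := by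
    intro x hx r hr
    have hcl : (⟨x, hx⟩ : ↥Ω) ∈ closure s := hsd _
    obtain ⟨y, hys, hyd⟩ := Metric.mem_closure_iff.mp hcl r hr
    have hymem : (y : Euc d) ∈ D := ⟨y, hys, rfl⟩
    rw [hxs] at hymem
    obtain ⟨n, hn⟩ := hymem
    refine ⟨n, ?_⟩
    rw [hn]
    rw [Subtype.dist_eq] at hyd
    rw [dist_comm]
    exact hyd
  -- clamped values in a compact product space; extract a subsequence
  have hclamp : ∀ a : ℝ, |a| ≤ M → max (-M) (min M a) = a := by
    intro a ha
    rw [abs_le] at ha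
    rw [min_eq_right ha.2, max_eq_right ha.1]
  set G : ℕ → (ℕ → Icc (-M : ℝ) M) := fun k n =>
    ⟨max (-M) (min M (f k (xs n))), by
      constructor
      · exact le_max_left _ _
      · exact max_le (by linarith) (min_le_left _ _)⟩ with hGdef
  obtain ⟨g, φ, hφ, hg⟩ := CompactSpace.tendsto_subseq G
  have hφle : ∀ k, k ≤ φ k := fun k => hφ.le_apply
  have hgn : ∀ n, Tendsto (fun k => max (-M) (min M (f (φ k) (xs n)))) atTop (𝓝 (g n : ℝ)) := by
    intro n
    have h1 : Tendsto (fun k => (G (φ k)) n) atTop (𝓝 (g n)) :=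
      ((continuous_apply n).tendsto g).comp hg
    exact (continuous_subtype_val.tendsto (g n)).comp h1
  -- pointwise convergence on all of Ω
  have hptwise : ∀ x ∈ Ω, ∃ L : ℝ, Tendsto (fun k => f (φ k) x) atTop (𝓝 L) := by
    intro x hx
    obtain ⟨ρ, hρ, hρsub⟩ := Metric.isOpen_iff.mp hop x hx
    have hKc : IsCompact (Metric.closedBall x (ρ / 2)) := isCompact_closedBall x _
    have hKΩ' : Metric.closedBall x (ρ / 2) ⊆ Ω :=
      (Metric.closedBall_subset_ball (by linarith)).trans hρsub
    obtain ⟨C, hC0, k₀, hk₀⟩ := hlip _ hKc hKΩ'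
    apply cauchySeq_tendsto_of_complete
    rw [Metric.cauchySeq_iff]
    intro ε hε
    have hrpos : 0 < min (ρ / 2) (ε / (4 * (C + 1))) := by positivity
    obtain ⟨n, hn⟩ := hDdense x hx _ hrpos
    have hyK : xs n ∈ Metric.closedBall x (ρ / 2) :=
      Metric.mem_closedBall.mpr ((hn.trans_le (min_le_left _ _)).le)
    have hxK : x ∈ Metric.closedBall x (ρ / 2) := Metric.mem_closedBall_self (by positivity)
    have hCau : CauchySeq (fun k => max (-M) (min M (f (φ k) (xs n)))) := (hgn n).cauchySeq
    obtain ⟨N₁, hN₁⟩ := Metric.cauchySeq_iff.mp hCau (ε / 3) (by positivity)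
    refine ⟨max N₁ k₀, ?_⟩
    intro a ha b hb
    have hak : k₀ ≤ φ a := le_trans (le_trans (le_max_right _ _) ha) (hφle a)
    have hbk : k₀ ≤ φ b := le_trans (le_trans (le_max_right _ _) hb) (hφle b)
    have hMa := (hk₀ (φ a) hak).1
    have hMb := (hk₀ (φ b) hbk).1
    have hLa := (hk₀ (φ a) hak).2
    have hLb := (hk₀ (φ b) hbk).2
    have hclampa : max (-M) (min M (f (φ a) (xs n))) = f (φ a) (xs n) :=
      hclamp _ (hMa _ hyK)
    have hclampb : max (-M) (min M (f (φ b) (xs n))) = f (φ b) (xs n) :=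
      hclamp _ (hMb _ hyK)
    have hmid : dist (f (φ a) (xs n)) (f (φ b) (xs n)) < ε / 3 := by
      rw [← hclampa, ← hclampb]
      exact hN₁ a (le_trans (le_max_left _ _) ha) b (le_trans (le_max_left _ _) hb)
    have hdxy : dist x (xs n) ≤ ε / (4 * (C + 1)) := by
      rw [dist_comm]
      exact (hn.trans_le (min_le_right _ _)).le
    have hCd : C * dist x (xs n) ≤ ε / 4 := by
      have h1 : C * dist x (xs n) ≤ C * (ε / (4 * (C + 1))) :=
        mul_le_mul_of_nonneg_left hdxy hC0
      have h2 : C * (ε / (4 * (C + 1))) ≤ ε / 4 := by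
        rw [mul_div_assoc', div_le_div_iff₀ (by positivity) (by norm_num)]
        nlinarith
      linarith
    have hea : |f (φ a) x - f (φ a) (xs n)| ≤ C * dist x (xs n) := hLa x hxK (xs n) hyK
    have heb : |f (φ b) x - f (φ b) (xs n)| ≤ C * dist x (xs n) := hLb x hxK (xs n) hyK
    rw [Real.dist_eq] at hmid ⊢
    have : |f (φ a) x - f (φ b) x| ≤ |f (φ a) x - f (φ a) (xs n)|
        + |f (φ a) (xs n) - f (φ b) (xs n)| + |f (φ b) (xs n) - f (φ b) x| := by
      have := abs_sub_le (f (φ a) x) (f (φ a) (xs n)) (f (φ b) x)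
      have := abs_sub_le (f (φ a) (xs n)) (f (φ b) (xs n)) (f (φ b) x)
      linarith [abs_sub_le (f (φ a) x) (f (φ a) (xs n)) (f (φ b) x),
        abs_sub_le (f (φ a) (xs n)) (f (φ b) (xs n)) (f (φ b) x)]
    rw [abs_sub_comm (f (φ b) (xs n)) (f (φ b) x)] at this
    calc |f (φ a) x - f (φ b) x| ≤ _ := this
      _ < C * dist x (xs n) + ε / 3 + C * dist x (xs n) := by
          apply add_lt_add_of_lt_of_le
          apply add_lt_add_of_le_of_lt hea hmid
          exact heb
      _ ≤ ε / 4 + ε / 3 + ε / 4 := by linarith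
      _ < ε := by linarith
  choose! v hv using hptwise
  -- assemble
  refine ⟨fun k => hseq (φ k), fun k => hhseqpos _, ?_, v, ?_, ?_⟩
  · -- tendsto 0
    apply squeeze_zero (fun k => (hhseqpos (φ k)).le) (fun k => hseqmono (hφle k))
    exact tendsto_one_div_add_atTop_nhds_zero_nat
  · -- convexity of v
    refine ⟨hcv, ?_⟩
    intro x hx y hy a b ha hb hab
    have hz : a • x + b • y ∈ Ω := hcv hx hy ha hb hab
    have hKc : IsCompact ({x} ∪ {y} ∪ {a • x + b • y} : Set (Euc d)) := by
      apply IsCompact.union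
      apply IsCompact.union
      all_goals exact isCompact_singleton
    have hKΩ' : ({x} ∪ {y} ∪ {a • x + b • y} : Set (Euc d)) ⊆ Ω := by
      intro z hz'
      rcases hz' with (hz' | hz') | hz'
      · rw [mem_singleton_iff] at hz'; rw [hz']; exact hx
      · rw [mem_singleton_iff] at hz'; rw [hz']; exact hy
      · rw [mem_singleton_iff] at hz'; rw [hz']; exact hz
    obtain ⟨k₀, hk₀⟩ := hfillN _ hKc hKΩ'
    have hev : ∀ᶠ k in atTop,
        f (φ k) (a • x + b • y) ≤ a * f (φ k) x + b * f (φ k) y := by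
      filter_upwards [eventually_ge_atTop k₀] with k hk
      have hsub : ({x} ∪ {y} ∪ {a • x + b • y} : Set (Euc d)) ⊆ convexHull ℝ (N (hseq (φ k))) :=
        hk₀ _ (hhseqpos _) (hseqmono (hk.trans (hφle k)))
      have hcx : x ∈ convexHull ℝ (N (hseq (φ k))) := hsub (Or.inl (Or.inl rfl))
      have hcy : y ∈ convexHull ℝ (N (hseq (φ k))) := hsub (Or.inl (Or.inr rfl))
      have := (hconvf (φ k)).2 hcx hcy ha hb hab
      simpa [smul_eq_mul] using this
    have h1 : Tendsto (fun k => f (φ k) (a • x + b • y)) atTop (𝓝 (v (a • x + b • y))) :=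
      hv _ hz
    have h2 : Tendsto (fun k => a * f (φ k) x + b * f (φ k) y) atTop
        (𝓝 (a * v x + b * v y)) := ((hv _ hx).const_mul a).add ((hv _ hy).const_mul b)
    have := le_of_tendsto_of_tendsto h1 h2 hev
    simpa [smul_eq_mul] using this
  · -- main per-compact statement
    intro K hK hKΩ
    constructor
    · obtain ⟨k₀, hk₀⟩ := hfillN K hK hKΩ
      exact ⟨k₀, fun k hk => hk₀ _ (hhseqpos _) (hseqmono (hk.trans (hφle k)))⟩
    · intro ε hε
      obtain ⟨C, hC0, k₀, hk₀⟩ := hlip K hK hKΩ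
      set r : ℝ := ε / (4 * (C + 1)) with hrdef
      have hrpos : 0 < r := by positivity
      have hCr : C * r ≤ ε / 4 := by
        rw [hrdef, mul_div_assoc', div_le_div_iff₀ (by positivity) (by norm_num)]
        nlinarith
      -- v is C-Lipschitz on K
      have hvlip : ∀ x ∈ K, ∀ y ∈ K, |v x - v y| ≤ C * dist x y := by
        intro x hx y hy
        have h1 : Tendsto (fun k => |f (φ k) x - f (φ k) y|) atTop (𝓝 |v x - v y|) :=
          ((hv _ (hKΩ hx)).sub (hv _ (hKΩ hy))).abs
        apply le_of_tendsto h1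
        filter_upwards [eventually_ge_atTop k₀] with k hk
        exact (hk₀ (φ k) (hk.trans (hφle k))).2 x hx y hy
      -- finite subcover by balls of radius r
      have hcov : K ⊆ ⋃ c ∈ K, Metric.ball c r := by
        intro z hz
        exact mem_biUnion hz (Metric.mem_ball_self hrpos)
      obtain ⟨T, hTK, hTfin, hTcov⟩ := hK.elim_finite_subcover_image
        (fun c _ => Metric.isOpen_ball) hcov
      -- convergence indices at centers
      have hTc : ∀ c ∈ T, ∃ Nc : ℕ, ∀ k ≥ Nc, dist (f (φ k) c) (v c) < ε / 4 := by
        intro c hc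
        exact Metric.tendsto_atTop.mp (hv c (hKΩ (hTK hc))) (ε / 4) (by positivity)
      choose! Nc hNc using hTc
      set k₂ : ℕ := hTfin.toFinset.sup Nc with hk₂def
      refine ⟨max k₀ k₂, ?_⟩
      intro k hk x hx
      obtain ⟨c, hcT, hxc⟩ := mem_iUnion₂.mp (hTcov hx)
      have hcK : c ∈ K := hTK hcT
      have hkk₀ : k₀ ≤ φ k := le_trans (le_trans (le_max_left _ _) hk) (hφle k)
      have hlipk := (hk₀ (φ k) hkk₀).2
      have hdxc : dist x c < r := Metric.mem_ball.mp hxc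
      have h1 : |f (φ k) x - f (φ k) c| ≤ C * dist x c := hlipk x hx c hcK
      have h2 : dist (f (φ k) c) (v c) < ε / 4 := by
        apply hNc c hcT k
        exact le_trans (le_trans (Finset.le_sup (hTfin.mem_toFinset.mpr hcT)) (le_max_right k₀ k₂)) hk
      have h3 : |v c - v x| ≤ C * dist c x := hvlip c hcK x hx
      have hCd1 : C * dist x c ≤ C * r := mul_le_mul_of_nonneg_left hdxc.le hC0
      have hCd2 : C * dist c x ≤ C * r := by
        rw [dist_comm]; exact hCd1
      rw [Real.dist_eq] at h2
      have htri : |f (φ k) x - v x| ≤ |f (φ k) x - f (φ k) c|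
          + |f (φ k) c - v c| + |v c - v x| := by
        linarith [abs_sub_le (f (φ k) x) (f (φ k) c) (v x),
          abs_sub_le (f (φ k) c) (v c) (v x)]
      have : |f (φ k) x - v x| < ε / 4 + ε / 4 + ε / 4 + ε / 4 := by
        have := htri
        nlinarith [hCr, hCd1, hCd2, h1, h2, h3]
      calc |f (φ k) x - v x| < ε / 4 + ε / 4 + ε / 4 + ε / 4 := this
        _ = ε := by ring

end
end

section
/- Let (u_h)_{h>0} be discrete convex mesh functions (with the full set of directions e ∈ ℤ^d \ {0}) converging uniformly on compact subsets of Ω to a continuous function u : Ω → ℝ. Then u is convex on Ω. -/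
open Set MeasureTheory Filter Topology

noncomputable section

/-- Node set `N_h = Ω_h ∪ ∂Ω_h` with the full set of directions `e ∈ ℤ^d \ {0}`. -/
def nodesAll {d : ℕ} (Ω : Set (Euc d)) (h : ℝ) : Set (Euc d) :=
  meshΩ Ω h ∪ meshBd Ω h {e : Fin d → ℤ | e ≠ 0}


/-- helper: componentwise bound gives norm bound -/
lemma euc_norm_le {d : ℕ} (v : Euc d) (c : ℝ) (hc : 0 ≤ c) (H : ∀ i, |v i| ≤ c) :
    ‖v‖ ≤ Real.sqrt d * c := by
  rw [EuclideanSpace.norm_eq]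
  have h1 : ∑ i, ‖v i‖^2 ≤ ∑ _i : Fin d, c^2 := by
    refine Finset.sum_le_sum fun i _ => ?_
    rw [Real.norm_eq_abs]
    exact pow_le_pow_left₀ (abs_nonneg _) (H i) 2
  rw [Finset.sum_const, Finset.card_univ, Fintype.card_fin, nsmul_eq_mul] at h1
  calc Real.sqrt (∑ i, ‖v i‖^2) ≤ Real.sqrt (d * c^2) := Real.sqrt_le_sqrt h1
    _ = Real.sqrt d * c := by rw [Real.sqrt_mul (by positivity), Real.sqrt_sq hc]

lemma hev_eq' {d : ℕ} (Ω : Set (Euc d)) {h : ℝ} (hh : 0 < h) (x : Euc d) (e : Fin d → ℤ)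
    (hx : x + h • intVec e ∈ closure Ω) : hev Ω h x e = h := by
  have hmem : h ∈ {t | ∃ r ∈ Icc (0:ℝ) 1, t = r * h ∧ x + (r * h) • intVec e ∈ closure Ω} :=
    ⟨1, ⟨zero_le_one, le_refl 1⟩, (one_mul h).symm, by rw [one_mul]; exact hx⟩
  have hub : ∀ t ∈ {t | ∃ r ∈ Icc (0:ℝ) 1, t = r * h ∧ x + (r * h) • intVec e ∈ closure Ω},
      t ≤ h := by
    rintro t ⟨r, ⟨hr0, hr1⟩, ht, -⟩; rw [ht]; nlinarith
  exact le_antisymm (csSup_le ⟨h, hmem⟩ hub) (le_csSup ⟨h, hub⟩ hmem)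

lemma intVec_neg {d : ℕ} (e : Fin d → ℤ) : intVec (-e) = - intVec e := by
  ext i; simp [intVec]

set_option maxHeartbeats 2000000 in
/-- if discrete convex mesh functions (with the full direction set
`e ∈ ℤ^d \ {0}`) converge uniformly on compact subsets of `Ω` to a continuous function `u`,
then `u` is convex on `Ω`. -/
theorem statement18 {d : ℕ} (hd : 1 ≤ d) (Ω : Set (Euc d))
    (hne : Ω.Nonempty) (hbd : Bornology.IsBounded Ω) (hop : IsOpen Ω) (hcv : Convex ℝ Ω)
    (uh : ℝ → Euc d → ℝ)
    (hdc : ∀ h : ℝ, 0 < h → DiscConvex Ω h (uh h))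
    (u : Euc d → ℝ) (huc : ContinuousOn u Ω)
    (hcvg : ∀ K : Set (Euc d), IsCompact K → K ⊆ Ω → ∀ ε : ℝ, 0 < ε →
      ∃ h₀ : ℝ, 0 < h₀ ∧ ∀ h : ℝ, 0 < h → h < h₀ →
        ∀ x ∈ nodesAll Ω h ∩ K, |uh h x - u x| < ε) :
    ConvexOn ℝ Ω u := by
  -- Step 1: midpoint convexity
  have key : ∀ y ∈ Ω, ∀ z ∈ Ω, u ((1/2 : ℝ) • (y + z)) ≤ (u y + u z) / 2 := by
    intro y hy z hz
    by_cases hyz : y = z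
    · subst hyz
      rw [show (1/2 : ℝ) • (y + y) = y by module]
      linarith
    set m : Euc d := (1/2 : ℝ) • (y + z) with hm
    have hmi : ∀ i, m i = (y i + z i) / 2 := by
      intro i
      simp only [hm, PiLp.smul_apply, PiLp.add_apply, smul_eq_mul]
      ring
    have hmΩ : m ∈ Ω := by
      have := hcv hy hz (by norm_num : (0:ℝ) ≤ 1/2) (by norm_num : (0:ℝ) ≤ 1/2) (by norm_num)
      rw [show (1/2:ℝ) • y + (1/2:ℝ) • z = m by rw [hm]; module] at this
      exact this
    have hzm : z ≠ m := by
      intro hzm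
      apply hyz
      ext i
      have := hmi i
      rw [← hzm] at this
      linarith
    have hnzm : 0 < ‖z - m‖ := by
      rw [norm_pos_iff, sub_ne_zero]; exact hzm
    apply le_of_forall_pos_le_add
    intro ε hε
    set ε' := ε / 5 with hε'def
    have hε' : 0 < ε' := by positivity
    -- continuity radii
    obtain ⟨dy, hdy0, hdy⟩ := Metric.continuousAt_iff.mp (huc.continuousAt (hop.mem_nhds hy)) ε' hε'
    obtain ⟨dz, hdz0, hdz⟩ := Metric.continuousAt_iff.mp (huc.continuousAt (hop.mem_nhds hz)) ε' hε'
    obtain ⟨dm, hdm0, hdm⟩ := Metric.continuousAt_iff.mp (huc.continuousAt (hop.mem_nhds hmΩ)) ε' hε'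
    -- openness radii
    obtain ⟨ry, hry0, hry⟩ := Metric.isOpen_iff.mp hop y hy
    obtain ⟨rz, hrz0, hrz⟩ := Metric.isOpen_iff.mp hop z hz
    obtain ⟨rm, hrm0, hrm⟩ := Metric.isOpen_iff.mp hop m hmΩ
    obtain ⟨ρ, hρ0, hρry, hρrz, hρrm, hρdy, hρdz, hρdm⟩ :
        ∃ ρ : ℝ, 0 < ρ ∧ 2*ρ ≤ ry ∧ 2*ρ ≤ rz ∧ 2*ρ ≤ rm ∧ 2*ρ ≤ dy ∧ 2*ρ ≤ dz ∧ 2*ρ ≤ dm := by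
      refine ⟨min ry (min rz (min rm (min dy (min dz dm)))) / 2, by positivity,
        ?_, ?_, ?_, ?_, ?_, ?_⟩ <;>
      · rw [mul_div_cancel₀ _ (two_ne_zero)]
        simp only [min_le_iff, le_refl, true_or, or_true]
    set K : Set (Euc d) := Metric.closedBall y ρ ∪ (Metric.closedBall z ρ ∪ Metric.closedBall m ρ)
      with hK
    have hKc : IsCompact K :=
      (isCompact_closedBall _ _).union ((isCompact_closedBall _ _).union (isCompact_closedBall _ _))
    have hKΩ : K ⊆ Ω := by
      rintro p (hp | hp | hp)
      · exact hry (lt_of_le_of_lt (Metric.mem_closedBall.mp hp) (by linarith))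
      · exact hrz (lt_of_le_of_lt (Metric.mem_closedBall.mp hp) (by linarith))
      · exact hrm (lt_of_le_of_lt (Metric.mem_closedBall.mp hp) (by linarith))
    obtain ⟨h₀, hh₀, hconv⟩ := hcvg K hKc hKΩ ε' hε'
    set sd := Real.sqrt d with hsd
    have hsd1 : 1 ≤ sd := by
      rw [hsd]
      exact Real.one_le_sqrt.mpr (by exact_mod_cast hd)
    have hsd0 : 0 < sd := by linarith
    obtain ⟨h, hh, hhh₀, h3ρ, h2zm⟩ :
        ∃ h : ℝ, 0 < h ∧ h < h₀ ∧ 3*sd*h ≤ ρ ∧ 2*sd*h < ‖z - m‖ := by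
      refine ⟨min h₀ (min (ρ/(3*sd)) (‖z - m‖/(3*sd))) / 2, by positivity, ?_, ?_, ?_⟩
      · have h1 : min h₀ (min (ρ/(3*sd)) (‖z - m‖/(3*sd))) ≤ h₀ := min_le_left _ _
        linarith
      · have h1 : min h₀ (min (ρ/(3*sd)) (‖z - m‖/(3*sd))) ≤ ρ/(3*sd) :=
          le_trans (min_le_right _ _) (min_le_left _ _)
        have h2 : 0 < 3*sd := by linarith
        rw [le_div_iff₀ h2] at h1
        nlinarith [le_min hh₀.le (le_min (by positivity : (0:ℝ) ≤ ρ/(3*sd)) (by positivity : (0:ℝ) ≤ ‖z-m‖/(3*sd)))]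
      · have h1 : min h₀ (min (ρ/(3*sd)) (‖z - m‖/(3*sd))) ≤ ‖z - m‖/(3*sd) :=
          le_trans (min_le_right _ _) (min_le_right _ _)
        have h2 : 0 < 3*sd := by linarith
        rw [le_div_iff₀ h2] at h1
        nlinarith [le_min hh₀.le (le_min (by positivity : (0:ℝ) ≤ ρ/(3*sd)) (by positivity : (0:ℝ) ≤ ‖z-m‖/(3*sd)))]
    -- construct mesh point and direction
    set x : Euc d := (EuclideanSpace.equiv (Fin d) ℝ).symm (fun i => (⌊m i / h⌋ : ℝ) * h) with hxdef
    have hx_def : ∀ i, x i = (⌊m i / h⌋ : ℝ) * h := fun _ => rfl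
    set e : Fin d → ℤ := fun i => ⌊(z i - x i) / h⌋ with hedef
    set v : Euc d := intVec e with hv
    have hv_def : ∀ i, v i = (e i : ℝ) := fun _ => rfl
    set z' : Euc d := x + h • v with hz'
    set y' : Euc d := x - h • v with hy'
    have hz'_i : ∀ i, z' i = x i + h * (e i : ℝ) := by
      intro i; rw [hz']; simp [hv_def i]
    have hy'_i : ∀ i, y' i = x i - h * (e i : ℝ) := by
      intro i; rw [hy']; simp [hv_def i]
    -- componentwise bounds
    have hx_m : ∀ i, |x i - m i| ≤ h := by
      intro i
      have hth : (m i / h) * h = m i := div_mul_cancel₀ _ (ne_of_gt hh)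
      have h1 : (⌊m i / h⌋ : ℝ) ≤ m i / h := Int.floor_le _
      have h2 : m i / h < ⌊m i / h⌋ + 1 := Int.lt_floor_add_one _
      have hA := mul_le_mul_of_nonneg_right h1 hh.le
      have hB := mul_lt_mul_of_pos_right h2 hh
      rw [hth] at hA hB
      rw [add_mul, one_mul] at hB
      rw [hx_def i, abs_le]
      constructor <;> linarith
    have hz'_z : ∀ i, |z' i - z i| ≤ h := by
      intro i
      have hth : ((z i - x i) / h) * h = z i - x i := div_mul_cancel₀ _ (ne_of_gt hh)
      have h1 : ((e i : ℤ) : ℝ) ≤ (z i - x i) / h := Int.floor_le _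
      have h2 : (z i - x i) / h < (e i : ℝ) + 1 := Int.lt_floor_add_one _
      have hA := mul_le_mul_of_nonneg_right h1 hh.le
      have hB := mul_lt_mul_of_pos_right h2 hh
      rw [hth] at hA hB
      rw [add_mul, one_mul] at hB
      rw [hz'_i i, abs_le]
      constructor <;> linarith
    have hy'_y : ∀ i, |y' i - y i| ≤ 3 * h := by
      intro i
      have hyi : y i = 2 * m i - z i := by
        have := hmi i; linarith
      have h1 := abs_le.mp (hx_m i)
      have h2 := abs_le.mp (hz'_z i)
      rw [hz'_i i] at h2
      rw [hy'_i i, hyi, abs_le]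
      constructor <;> linarith [h1.1, h1.2, h2.1, h2.2]
    -- norm bounds
    have hxm : ‖x - m‖ ≤ sd * h := euc_norm_le _ h hh.le (by intro i; simpa using hx_m i)
    have hz'zn : ‖z' - z‖ ≤ sd * h := euc_norm_le _ h hh.le (by intro i; simpa using hz'_z i)
    have hy'yn : ‖y' - y‖ ≤ sd * (3*h) := by
      refine euc_norm_le _ (3*h) (by positivity) ?_
      intro i; simpa using hy'_y i
    -- memberships
    have hsdh : sd * h ≤ ρ := by nlinarith [mul_pos hsd0 hh]
    have hxK : x ∈ Metric.closedBall m ρ := by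
      rw [Metric.mem_closedBall, dist_eq_norm]; linarith
    have hz'K : z' ∈ Metric.closedBall z ρ := by
      rw [Metric.mem_closedBall, dist_eq_norm]; linarith
    have hy'K : y' ∈ Metric.closedBall y ρ := by
      rw [Metric.mem_closedBall, dist_eq_norm]
      calc ‖y' - y‖ ≤ sd*(3*h) := hy'yn
        _ ≤ ρ := by linarith [h3ρ, show sd*(3*h) = 3*sd*h from by ring]
    have hxΩ : x ∈ Ω := hKΩ (Or.inr (Or.inr hxK))
    have hz'Ω : z' ∈ Ω := hKΩ (Or.inr (Or.inl hz'K))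
    have hy'Ω : y' ∈ Ω := hKΩ (Or.inl hy'K)
    have hxl : x ∈ latt d h := fun i => ⟨⌊m i / h⌋, hx_def i⟩
    have hz'l : z' ∈ latt d h := by
      intro i; exact ⟨⌊m i / h⌋ + e i, by rw [hz'_i i, hx_def i]; push_cast; ring⟩
    have hy'l : y' ∈ latt d h := by
      intro i; exact ⟨⌊m i / h⌋ - e i, by rw [hy'_i i, hx_def i]; push_cast; ring⟩
    -- e ≠ 0
    have he0 : e ≠ 0 := by
      intro h0
      have hv0 : v = 0 := by
        ext i; rw [hv_def i, h0]; simp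
      have hz'x : z' = x := by rw [hz', hv0]; simp
      have hxz : ‖x - z‖ ≤ sd * h := by rw [← hz'x]; exact hz'zn
      have hzm2 : ‖z - m‖ ≤ 2 * sd * h := by
        calc ‖z - m‖ = ‖(z - x) + (x - m)‖ := by abel_nf
          _ ≤ ‖z - x‖ + ‖x - m‖ := norm_add_le _ _
          _ = ‖x - z‖ + ‖x - m‖ := by rw [norm_sub_rev]
          _ ≤ 2 * sd * h := by linarith
      linarith
    -- discrete convexity at x
    have hz'cl : x + h • intVec e ∈ closure Ω := subset_closure (by rw [← hv, ← hz']; exact hz'Ω)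
    have hy'cl : x + h • intVec (-e) ∈ closure Ω := by
      rw [intVec_neg, ← hv, smul_neg, ← sub_eq_add_neg, ← hy']
      exact subset_closure hy'Ω
    have he1 : hev Ω h x e = h := hev_eq' Ω hh x e hz'cl
    have he2 : hev Ω h x (-e) = h := hev_eq' Ω hh x (-e) hy'cl
    have hDC := hdc h hh x ⟨hxΩ, hxl⟩ e he0
    rw [deltaE, he1, he2, intVec_neg, ← hv, smul_neg, ← sub_eq_add_neg, ← hy', ← hz'] at hDC
    have hkey : uh h x ≤ (uh h z' + uh h y') / 2 := by
      have hc : (0:ℝ) < 2 / (h + h) := by positivity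
      have hS := (mul_nonneg_iff_of_pos_left hc).mp hDC
      rw [← add_div] at hS
      rcases div_nonneg_iff.mp hS with ⟨hnum, -⟩ | ⟨-, hden⟩
      · linarith
      · linarith
    -- convergence bounds
    have hcx := hconv h hh hhh₀ x ⟨Or.inl ⟨hxΩ, hxl⟩, Or.inr (Or.inr hxK)⟩
    have hcz' := hconv h hh hhh₀ z' ⟨Or.inl ⟨hz'Ω, hz'l⟩, Or.inr (Or.inl hz'K)⟩
    have hcy' := hconv h hh hhh₀ y' ⟨Or.inl ⟨hy'Ω, hy'l⟩, Or.inl hy'K⟩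
    -- continuity bounds
    have hum : dist (u x) (u m) < ε' :=
      hdm (lt_of_le_of_lt (Metric.mem_closedBall.mp hxK) (by linarith))
    have huz : dist (u z') (u z) < ε' :=
      hdz (lt_of_le_of_lt (Metric.mem_closedBall.mp hz'K) (by linarith))
    have huy : dist (u y') (u y) < ε' :=
      hdy (lt_of_le_of_lt (Metric.mem_closedBall.mp hy'K) (by linarith))
    rw [Real.dist_eq, abs_lt] at hum huz huy
    rw [abs_lt] at hcx hcz' hcy'
    have : ε' = ε / 5 := rfl
    linarith [hum.1, hum.2, huz.1, huz.2, huy.1, huy.2, hcx.1, hcx.2, hcz'.1, hcz'.2,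
      hcy'.1, hcy'.2, hkey]
  -- Step 2: midpoint convexity + continuity ⇒ convexity
  refine ⟨hcv, ?_⟩
  intro p hp q hq a b ha hb hab
  have ha' : a = 1 - b := by linarith
  subst ha'
  set P : ℝ → Euc d := fun t => p + t • (q - p) with hP
  have hPmem : ∀ t ∈ Icc (0:ℝ) 1, P t ∈ Ω := by
    intro t ht
    have h1 := hcv hp hq (by linarith [ht.2] : (0:ℝ) ≤ 1 - t) ht.1 (by ring)
    rw [show (1-t) • p + t • q = P t by rw [hP]; module] at h1
    exact h1
  have hPcont : Continuous P := by
    apply continuous_const.add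
    exact continuous_id.smul continuous_const
  set φ : ℝ → ℝ := fun t => u (P t) - (u p + t * (u q - u p)) with hφ
  have hφcont : ContinuousOn φ (Icc 0 1) := by
    apply ContinuousOn.sub
    · exact huc.comp hPcont.continuousOn hPmem
    · exact (continuous_const.add (continuous_id.mul continuous_const)).continuousOn
  have hφ0 : φ 0 = 0 := by
    simp only [hφ, hP]
    simp
  have hφ1 : φ 1 = 0 := by
    simp only [hφ, hP]
    rw [show p + (1:ℝ) • (q - p) = q by module]
    ring
  have hmid : ∀ s ∈ Icc (0:ℝ) 1, ∀ t ∈ Icc (0:ℝ) 1, φ ((s+t)/2) ≤ (φ s + φ t) / 2 := by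
    intro s hs t ht
    have h1 : P ((s+t)/2) = (1/2 : ℝ) • (P s + P t) := by
      simp only [hP]; module
    have h2 := key (P s) (hPmem s hs) (P t) (hPmem t ht)
    rw [← h1] at h2
    simp only [hφ]
    linarith
  clear_value P φ
  obtain ⟨t0, ht0, hmax⟩ := isCompact_Icc.exists_isMaxOn ⟨0, left_mem_Icc.mpr zero_le_one⟩ hφcont
  have hmax' : ∀ t ∈ Icc (0:ℝ) 1, φ t ≤ φ t0 := fun t ht => hmax ht
  have hφt0 : φ t0 ≤ 0 := by
    rcases le_total t0 (1 - t0) with hc | hc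
    · have h2 : 2*t0 ∈ Icc (0:ℝ) 1 := ⟨by linarith [ht0.1], by linarith⟩
      have h3 := hmid 0 (left_mem_Icc.mpr zero_le_one) (2*t0) h2
      rw [hφ0, show (0 + 2*t0)/2 = t0 by ring] at h3
      have h4 := hmax' (2*t0) h2
      linarith
    · have h2 : 2*t0 - 1 ∈ Icc (0:ℝ) 1 := ⟨by linarith, by linarith [ht0.2]⟩
      have h3 := hmid (2*t0-1) h2 1 (right_mem_Icc.mpr zero_le_one)
      rw [hφ1, show (2*t0-1+1)/2 = t0 by ring] at h3
      have h4 := hmax' (2*t0-1) h2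
      linarith
  have hb1 : b ∈ Icc (0:ℝ) 1 := ⟨hb, by linarith⟩
  have hφb : φ b ≤ 0 := le_trans (hmax' b hb1) hφt0
  simp only [hφ] at hφb
  rw [show (1-b) • p + b • q = P b by rw [hP]; module]
  simp only [smul_eq_mul]
  have heq : (1-b) * u p + b * u q = u p + b * (u q - u p) := by ring
  rw [heq]
  linarith

end
end
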